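/- arXiv:2401.04981 — 5 statements merged into one kernel-verified Lean document; each statement's English description precedes it below -/
import Mathlib

section
/- Let Y_d(n) be the sum of n independent random variables each uniform on {1/d, 2/d, …, (d−1)/d}, and for an integer m let α_m = P(Y_d(n) = m) and β_m = P(Z_d(n) = m) where Z_d(n) is Y_d(n) conditioned on being an integer. Then α_m = (1/d + (−1)^n/(d(d−1)^{n−1})) · β_m. -/
private lemma inner_count (d s : ℕ) (hd : 2 ≤ d) :
    (Finset.univ.filter (fun x : Fin (d-1) => d ∣ ((x:ℕ)+1) + s)).card
      = if d ∣ s then 0 else 1 := by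
  split_ifs with h
  · rw [Finset.card_eq_zero, Finset.filter_eq_empty_iff]
    intro x _ hdvd
    have h2 : d ∣ (x:ℕ)+1 := (Nat.dvd_add_iff_left h).mpr hdvd
    have := Nat.le_of_dvd (Nat.succ_pos _) h2
    have := x.isLt
    omega
  · have hr : s % d ≠ 0 := fun hr => h (Nat.dvd_of_mod_eq_zero hr)
    have hrd : s % d < d := Nat.mod_lt _ (by omega)
    rw [Finset.card_eq_one]
    refine ⟨⟨d - s % d - 1, by omega⟩, ?_⟩
    ext x
    simp only [Finset.mem_filter, Finset.mem_univ, true_and, Finset.mem_singleton]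
    have hq := Nat.mod_add_div s d
    constructor
    · intro hdvd
      have hx := x.isLt
      have hD : d ∣ d * (s/d) := Dvd.intro _ rfl
      have heq : ((x:ℕ)+1) + s = (((x:ℕ)+1) + s % d) + d * (s/d) := by omega
      rw [heq] at hdvd
      have h1 : d ∣ ((x:ℕ)+1) + s % d := (Nat.dvd_add_iff_left hD).mpr hdvd
      obtain ⟨k, hk⟩ := h1
      have hk1 : k = 1 := by
        rcases Nat.lt_or_ge k 2 with h2 | h2
        · interval_cases k <;> omega
        · exfalso
          have : d * 2 ≤ d * k := Nat.mul_le_mul_left d h2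
          omega
      subst hk1
      apply Fin.ext
      simp only []
      omega
    · intro hx
      subst hx
      simp only []
      refine ⟨1 + s/d, ?_⟩
      have : d * (1 + s/d) = d + d * (s/d) := by ring
      omega
lemma cnt_succ (d n : ℕ) (hd : 2 ≤ d) :
    (Finset.univ.filter (fun a : Fin (n+1) → Fin (d-1) => d ∣ ∑ i, ((a i:ℕ)+1))).card
    + (Finset.univ.filter (fun a : Fin n → Fin (d-1) => d ∣ ∑ i, ((a i:ℕ)+1))).card
    = (d-1)^n := by
  have h1 : (Finset.univ.filter (fun a : Fin (n+1) → Fin (d-1) => d ∣ ∑ i, ((a i:ℕ)+1))).card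
      = ∑ p : Fin (d-1) × (Fin n → Fin (d-1)),
          if d ∣ ((p.1:ℕ)+1) + ∑ i, ((p.2 i:ℕ)+1) then 1 else 0 := by
    rw [Finset.card_filter]
    rw [← Equiv.sum_comp (Fin.consEquiv fun _ => Fin (d-1))
      (fun a => if d ∣ ∑ i, ((a i:ℕ)+1) then 1 else 0)]
    apply Fintype.sum_congr
    intro p
    congr 1
    simp [Fin.consEquiv, Fin.sum_univ_succ, add_assoc]
  rw [h1, Fintype.sum_prod_type]
  rw [Finset.sum_comm]
  have h2 : ∀ a : Fin n → Fin (d-1),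
      (∑ x : Fin (d-1), if d ∣ ((x:ℕ)+1) + ∑ i, ((a i:ℕ)+1) then 1 else 0)
      = if d ∣ ∑ i, ((a i:ℕ)+1) then 0 else 1 := by
    intro a
    rw [← Finset.card_filter, inner_count d _ hd]
  rw [Finset.sum_congr rfl (fun a _ => h2 a)]
  have h3 : (∑ a : Fin n → Fin (d-1), if d ∣ ∑ i, ((a i:ℕ)+1) then 0 else 1)
      = (Finset.univ.filter (fun a : Fin n → Fin (d-1) => ¬ d ∣ ∑ i, ((a i:ℕ)+1))).card := by
    rw [Finset.card_filter]
    apply Finset.sum_congr rfl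
    intro a _
    by_cases h : d ∣ ∑ i, ((a i:ℕ)+1) <;> simp [h]
  rw [h3]
  rw [Nat.add_comm, Finset.card_filter_add_card_filter_not]
  simp [Fintype.card_fun]
lemma cnt_key (d : ℕ) (hd : 2 ≤ d) : ∀ n : ℕ,
    (d : ℤ) * (Finset.univ.filter (fun a : Fin n → Fin (d-1) => d ∣ ∑ i, ((a i:ℕ)+1))).card
    = ((d:ℤ)-1)^n + (-1)^n * ((d:ℤ)-1) := by
  intro n
  induction n with
  | zero =>
    simp
  | succ n ih =>
    have hc : ((d-1:ℕ):ℤ) = (d:ℤ) - 1 := by rw [Nat.cast_sub (le_trans one_le_two hd), Nat.cast_one]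
    have h := cnt_succ d n hd
    set A := (Finset.univ.filter (fun a : Fin (n+1) → Fin (d-1) => d ∣ ∑ i, ((a i:ℕ)+1))).card with hA
    set B := (Finset.univ.filter (fun a : Fin n → Fin (d-1) => d ∣ ∑ i, ((a i:ℕ)+1))).card with hB
    have h' : (A:ℤ) + (B:ℤ) = ((d:ℤ)-1)^n := by
      calc (A:ℤ) + (B:ℤ) = (((d-1:ℕ)^n : ℕ) : ℤ) := by exact_mod_cast h
        _ = ((d:ℤ)-1)^n := by rw [Nat.cast_pow, hc]
    linear_combination (d:ℤ) * h' - ih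
/-- Let `Y_d(n)` be the sum of `n` i.i.d. uniforms on `{1/d, …, (d−1)/d}` and
`Z_d(n)` be `Y_d(n)` conditioned on being an integer.  For an integer `m`, with
`α_m = P(Y_d(n) = m)` and `β_m = P(Z_d(n) = m)`, one has
`α_m = (1/d + (−1)ⁿ/(d(d−1)^{n−1})) · β_m`.
Tuples are realized as `a : Fin n → Fin (d−1)` with coordinate values `a i + 1`,
so `Y_d(n) = (∑ (a i + 1))/d` and `Y_d(n) = m` iff `∑ (a i + 1) = m·d`. -/
theorem stmt_8 (d n : ℕ) (hd : 2 ≤ d) (hn : 1 ≤ n) (m : ℤ) :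
    ((Finset.univ.filter
        (fun a : Fin n → Fin (d - 1) => ((∑ i, ((a i : ℕ) + 1) : ℕ) : ℤ) = m * d)).card : ℝ)
      / ((d : ℝ) - 1) ^ n
    = (1 / d + (-1 : ℝ) ^ n / (d * ((d : ℝ) - 1) ^ (n - 1))) *
      (((Finset.univ.filter
          (fun a : Fin n → Fin (d - 1) => ((∑ i, ((a i : ℕ) + 1) : ℕ) : ℤ) = m * d)).card : ℝ)
        / ((Finset.univ.filter
            (fun a : Fin n → Fin (d - 1) => d ∣ ∑ i, ((a i : ℕ) + 1))).card : ℝ)) := by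
  set A := (Finset.univ.filter
      (fun a : Fin n → Fin (d - 1) => ((∑ i, ((a i : ℕ) + 1) : ℕ) : ℤ) = m * d)).card with hA
  set B := (Finset.univ.filter
      (fun a : Fin n → Fin (d - 1) => d ∣ ∑ i, ((a i : ℕ) + 1))).card with hB
  by_cases hA0 : A = 0
  · simp [hA0]
  · -- B ≠ 0
    have hB0 : B ≠ 0 := by
      obtain ⟨a, ha⟩ := Finset.card_ne_zero.mp hA0
      rw [Finset.mem_filter] at ha
      apply Finset.card_ne_zero.mpr
      refine ⟨a, Finset.mem_filter.mpr ⟨Finset.mem_univ _, ?_⟩⟩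
      have : ((∑ i, ((a i : ℕ) + 1) : ℕ) : ℤ) = d * m := by rw [ha.2]; ring
      have : (d:ℤ) ∣ ((∑ i, ((a i : ℕ) + 1) : ℕ) : ℤ) := ⟨m, this⟩
      exact_mod_cast this
    have key := cnt_key d hd n
    rw [← hB] at key
    have keyR : (d:ℝ) * B = ((d:ℝ)-1)^n + (-1)^n * ((d:ℝ)-1) := by exact_mod_cast key
    obtain ⟨k, rfl⟩ : ∃ k, n = k + 1 := ⟨n - 1, (Nat.succ_pred_eq_of_pos hn).symm⟩
    have hk1 : k + 1 - 1 = k := rfl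
    rw [hk1]
    have hd0 : (d:ℝ) ≠ 0 := by positivity
    have hd1 : (d:ℝ) - 1 ≠ 0 := by
      have : (2:ℝ) ≤ d := by exact_mod_cast hd
      nlinarith
    have hp : ((d:ℝ) - 1)^k ≠ 0 := pow_ne_zero _ hd1
    have hp1 : ((d:ℝ) - 1)^(k+1) ≠ 0 := pow_ne_zero _ hd1
    have hBR : (B:ℝ) ≠ 0 := Nat.cast_ne_zero.mpr hB0
    field_simp
    linear_combination (((d:ℝ)-1)^k) * keyR
end

section
/- For d ≥ n ≥ 500000, E[|Z_d(n) − n/2|] ≥ (1 − 1/(d−1)^{n−1}) · E[|Y_d(n) − n/2|] − 1. -/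
/-- The sum `∑ (a i + 1)` attached to a tuple `a : Fin n → Fin (d−1)`;
`Y_d(n)(a)` is this divided by `d`. -/
def tupleSum (d n : ℕ) (a : Fin n → Fin (d - 1)) : ℕ := ∑ i, ((a i : ℕ) + 1)

/-- The tuples on which `Y_d(n)` is an integer, i.e. the event defining `Z_d(n)`. -/
def intTuples (d n : ℕ) : Finset (Fin n → Fin (d - 1)) :=
  Finset.univ.filter (fun a => d ∣ tupleSum d n a)

namespace Stmt13
def c0 (d T : ℕ) : ℕ := d - 1 - T % d
lemma c0_lt {d : ℕ} (hd : 2 ≤ d) (T : ℕ) (hT : ¬ d ∣ T) : c0 d T < d - 1 := by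
  have h1 : T % d < d := Nat.mod_lt _ (by omega)
  have h2 : T % d ≠ 0 := fun h => hT (Nat.dvd_of_mod_eq_zero h)
  unfold c0; omega
lemma c0_dvd {d : ℕ} (hd : 2 ≤ d) (T : ℕ) (hT : ¬ d ∣ T) : d ∣ (c0 d T + 1 + T) := by
  have h1 : T % d < d := Nat.mod_lt _ (by omega)
  have h2 : T % d ≠ 0 := fun h => hT (Nat.dvd_of_mod_eq_zero h)
  have h3 := Nat.div_add_mod T d
  refine ⟨1 + T / d, ?_⟩
  rw [Nat.mul_add, Nat.mul_one]
  unfold c0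
  omega
lemma no_ext {d : ℕ} (hd : 2 ≤ d) (T : ℕ) (hT : d ∣ T) (c : Fin (d - 1)) :
    ¬ d ∣ ((c : ℕ) + 1 + T) := by
  intro h
  have h2 : d ∣ ((c : ℕ) + 1) := (Nat.dvd_add_right hT).mp (by rwa [add_comm] at h)
  have := Nat.le_of_dvd (by omega) h2
  have := c.isLt
  omega
lemma tupleSum_cons (d m : ℕ) (c : Fin (d - 1)) (b : Fin m → Fin (d - 1)) :
    tupleSum d (m + 1) (Fin.cons c b) = ((c : ℕ) + 1) + tupleSum d m b := by
  unfold tupleSum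
  rw [Fin.sum_univ_succ]
  simp
lemma sum_pi_succ {α : Type*} [AddCommMonoid α] (D m : ℕ) (f : (Fin (m + 1) → Fin D) → α) :
    ∑ a : Fin (m + 1) → Fin D, f a
      = ∑ b : Fin m → Fin D, ∑ c : Fin D, f (Fin.cons c b) := by
  rw [← Equiv.sum_comp (Fin.consEquiv (fun _ : Fin (m + 1) => Fin D)) f,
    Fintype.sum_prod_type]
  exact Finset.sum_comm
lemma c0_unique {d : ℕ} (hd : 2 ≤ d) (T : ℕ) (hT : ¬ d ∣ T) (c : ℕ) (hc : c < d - 1)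
    (hdvd : d ∣ (c + 1 + T)) : c = c0 d T := by
  have h1 : T % d < d := Nat.mod_lt _ (by omega)
  have h2 : T % d ≠ 0 := fun h => hT (Nat.dvd_of_mod_eq_zero h)
  have h3 := Nat.div_add_mod T d
  have h4 : d ∣ (c + 1 + T % d) := by
    have : c + 1 + T = (c + 1 + T % d) + d * (T / d) := by omega
    rw [this] at hdvd
    exact (Nat.dvd_add_right (Dvd.intro _ rfl)).mp (by rwa [add_comm] at hdvd)
  obtain ⟨k, hk⟩ := h4
  have hc1 : (c : ℕ) + 1 + T % d ≤ 2 * d - 2 := by omega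
  have hk1 : k = 1 := by
    have h5 : k = 0 ∨ k = 1 ∨ 2 ≤ k := by omega
    rcases h5 with h | h | h
    · subst h; omega
    · exact h
    · have : d * 2 ≤ d * k := Nat.mul_le_mul_left d h
      omega
  subst hk1
  rw [Nat.mul_one] at hk
  unfold c0; omega

def c0fin (d T : ℕ) (hd : 2 ≤ d) : Fin (d - 1) := ⟨c0 d T % (d - 1), Nat.mod_lt _ (by omega)⟩
lemma c0fin_val {d : ℕ} (hd : 2 ≤ d) (T : ℕ) (hT : ¬ d ∣ T) :
    ((c0fin d T hd : ℕ)) = c0 d T := by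
  simp only [c0fin]
  exact Nat.mod_eq_of_lt (c0_lt hd T hT)
lemma dvd_iff_c0 {d : ℕ} (hd : 2 ≤ d) (T : ℕ) (hT : ¬ d ∣ T) (c : Fin (d - 1)) :
    (d ∣ ((c : ℕ) + 1 + T)) ↔ c = c0fin d T hd := by
  constructor
  · intro h
    have := c0_unique hd T hT c c.isLt h
    exact Fin.ext (by rw [this, c0fin_val hd T hT])
  · rintro rfl
    rw [c0fin_val hd T hT]
    exact c0_dvd hd T hT
lemma card_rec {d : ℕ} (hd : 2 ≤ d) (k : ℕ) :
    (intTuples d (k + 1)).card + (intTuples d k).card = (d - 1) ^ k := by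
  classical
  have h1 : (intTuples d (k + 1)).card
      = ∑ b : Fin k → Fin (d - 1), ∑ c : Fin (d - 1),
          if d ∣ ((c : ℕ) + 1 + tupleSum d k b) then 1 else 0 := by
    rw [intTuples, Finset.card_filter]
    rw [sum_pi_succ (d - 1) k (fun a => if d ∣ tupleSum d (k + 1) a then 1 else 0)]
    refine Finset.sum_congr rfl fun b _ => Finset.sum_congr rfl fun c _ => ?_
    rw [tupleSum_cons]
  have h2 : ∀ b : Fin k → Fin (d - 1),
      (∑ c : Fin (d - 1), if d ∣ ((c : ℕ) + 1 + tupleSum d k b) then 1 else 0)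
        = if d ∣ tupleSum d k b then 0 else 1 := by
    intro b
    by_cases hb : d ∣ tupleSum d k b
    · rw [if_pos hb]
      exact Finset.sum_eq_zero fun c _ => if_neg (no_ext hd _ hb c)
    · rw [if_neg hb]
      simp only [dvd_iff_c0 hd _ hb]
      rw [Finset.sum_ite_eq']
      simp
  rw [h1, Finset.sum_congr rfl fun b _ => h2 b]
  have h3 : (∑ b : Fin k → Fin (d - 1), if d ∣ tupleSum d k b then (0:ℕ) else 1)
      = (Finset.univ.filter (fun b : Fin k → Fin (d-1) => ¬ d ∣ tupleSum d k b)).card := by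
    rw [Finset.card_filter]
    refine Finset.sum_congr rfl fun b _ => ?_
    by_cases hb : d ∣ tupleSum d k b <;> simp [hb]
  rw [h3, intTuples]
  have h4 := Finset.card_filter_add_card_filter_not
    (s := (Finset.univ : Finset (Fin k → Fin (d-1)))) (fun b => d ∣ tupleSum d k b)
  have h5 : (Finset.univ : Finset (Fin k → Fin (d-1))).card = (d-1)^k := by
    rw [Finset.card_univ, Fintype.card_fun]
    simp
  omega
lemma card_int {d : ℕ} (hd : 2 ≤ d) (k : ℕ) :
    (d : ℤ) * ((intTuples d k).card : ℤ) = ((d : ℤ) - 1) ^ k + (-1) ^ k * ((d : ℤ) - 1) := by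
  induction k with
  | zero =>
    have : (intTuples d 0) = Finset.univ := by
      ext a
      simp [intTuples, tupleSum]
    rw [this]
    simp [Finset.card_univ]
  | succ k ih =>
    have h := card_rec hd k
    have hcast : ((intTuples d (k+1)).card : ℤ) = ((d-1:ℕ):ℤ)^k - ((intTuples d k).card : ℤ) := by
      have := congrArg (fun x : ℕ => (x : ℤ)) h
      push_cast at this ⊢
      omega
    rw [hcast]
    have hd1 : ((d - 1 : ℕ) : ℤ) = (d : ℤ) - 1 := by omega
    rw [hd1]
    rw [mul_sub, ih]
    ring
lemma card_pos {d : ℕ} (hd : 3 ≤ d) {k : ℕ} (hk : 2 ≤ k) : 0 < (intTuples d k).card := by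
  have hci := card_int (d := d) (by omega : 2 ≤ d) k
  refine Nat.pos_of_ne_zero fun h0 => ?_
  rw [h0] at hci
  simp only [Nat.cast_zero, mul_zero] at hci
  have hp1 : ((d:ℤ) - 1)^2 ≤ ((d:ℤ) - 1)^k := pow_le_pow_right₀ (by omega) hk
  have hp2 : (-1:ℤ)^k * ((d:ℤ) - 1) ≥ -((d:ℤ) - 1) := by
    rcases Nat.even_or_odd k with hk' | hk'
    · rw [hk'.neg_one_pow]; omega
    · rw [hk'.neg_one_pow]; omega
  have hd3 : (3:ℤ) ≤ (d:ℤ) := by exact_mod_cast hd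
  nlinarith [hp1, hp2]

lemma sum_abs_int (D : ℕ) : ∀ e : ℕ, e < D →
    (∑ c ∈ Finset.range D, |(c : ℤ) - (e : ℤ)|) * 2 ≤ (D : ℤ) * ((D : ℤ) - 1) := by
  induction D with
  | zero => intro e h; omega
  | succ D ih =>
    intro e he
    rw [Finset.sum_range_succ, add_mul]
    rcases Nat.lt_or_ge e D with h | h
    · have h1 := ih e h
      have habs : |(D : ℤ) - (e : ℤ)| ≤ (D : ℤ) := by
        rw [abs_of_nonneg (by omega)]; omega
      push_cast
      push_cast at h1
      nlinarith [h1, habs]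
    · have heD : e = D := by omega
      subst heD
      have h2 : (∑ c ∈ Finset.range e, |(c : ℤ) - (e : ℤ)|)
          = (e : ℤ) * e - ∑ c ∈ Finset.range e, (c : ℤ) := by
        rw [Finset.sum_congr rfl (fun c hc => by
          rw [abs_sub_comm, abs_of_nonneg (by
            simp only [Finset.mem_range] at hc; omega)])]
        rw [Finset.sum_sub_distrib, Finset.sum_const, Finset.card_range]
        push_cast; ring
      have h3 : (∑ c ∈ Finset.range e, (c : ℤ)) * 2 = (e : ℤ) * ((e : ℤ) - 1) := by
        have := Finset.sum_range_id_mul_two e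
        have h4 : ((∑ c ∈ Finset.range e, c : ℕ) : ℤ) = ∑ c ∈ Finset.range e, (c : ℤ) := by
          push_cast; rfl
        rcases Nat.eq_zero_or_pos e with h5 | h5
        · subst h5; simp
        · have h6 : (e : ℤ) * ((e:ℤ) - 1) = ((e * (e - 1) : ℕ) : ℤ) := by
            push_cast [Nat.cast_sub h5]; ring
          rw [← h4, h6, ← this]
          push_cast; ring
      rw [h2]
      have : |(e : ℤ) - (e : ℤ)| = 0 := by simp
      rw [this]
      push_cast
      nlinarith [h3]

lemma sum_abs_fin (d : ℕ) (hd : 2 ≤ d) (e : Fin (d - 1)) :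
    (∑ c : Fin (d - 1), |(c : ℝ) - (e : ℝ)|) ≤ ((d:ℝ) - 1) * ((d:ℝ) - 2) / 2 := by
  have h := sum_abs_int (d - 1) e e.isLt
  have hcast : (∑ c : Fin (d - 1), |(c : ℝ) - (e : ℝ)|)
      = ((∑ c ∈ Finset.range (d-1), |(c : ℤ) - ((e:ℕ) : ℤ)|) : ℤ) := by
    rw [Fin.sum_univ_eq_sum_range (fun c => |(c : ℝ) - ((e:ℕ) : ℝ)|) (d-1)]
    push_cast
    rfl
  rw [hcast]
  have hZ : (∑ c ∈ Finset.range (d-1), |(c : ℤ) - ((e:ℕ) : ℤ)|) * 2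
      ≤ ((d:ℤ) - 1) * ((d:ℤ) - 2) := by
    have hd1 : ((d-1:ℕ):ℤ) = (d:ℤ) - 1 := by omega
    rw [hd1] at h
    exact le_of_le_of_eq h (by ring)
  have h2 : ((((∑ c ∈ Finset.range (d-1), |(c : ℤ) - ((e:ℕ) : ℤ)|) * 2 : ℤ)) : ℝ)
      ≤ (((d:ℤ) - 1) * ((d:ℤ) - 2) : ℤ) := Int.cast_le.mpr hZ
  push_cast at h2 ⊢
  linarith
lemma sum_vals (d : ℕ) (hd : 2 ≤ d) :
    (∑ c : Fin (d - 1), ((c : ℝ) + 1)) = ((d:ℝ) - 1) * (d:ℝ) / 2 := by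
  have h := Finset.sum_range_id_mul_two (d - 1)
  have h1 : (∑ c : Fin (d - 1), ((c : ℝ) + 1))
      = (∑ c ∈ Finset.range (d-1), ((c:ℝ) + 1)) := by
    rw [Fin.sum_univ_eq_sum_range (fun c => ((c:ℝ) + 1)) (d-1)]
  rw [h1, Finset.sum_add_distrib, Finset.sum_const, Finset.card_range]
  have h2 : (∑ c ∈ Finset.range (d-1), (c:ℝ)) * 2 = ((d:ℝ) - 1) * ((d:ℝ) - 2) := by
    have h3 := congrArg (fun x : ℕ => (x : ℝ)) h
    have h5 : d - 1 - 1 = d - 2 := by omega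
    rw [h5] at h3
    push_cast [Nat.cast_sub (by omega : 1 ≤ d), Nat.cast_sub (by omega : 2 ≤ d)] at h3
    convert h3 using 2
  have h4 : ((d - 1 : ℕ) : ℝ) = (d:ℝ) - 1 := by
    push_cast [Nat.cast_sub (by omega : 1 ≤ d)]; ring
  rw [nsmul_eq_mul, h4]
  nlinarith [h2]
lemma tupleSum_le (d k : ℕ) (a : Fin k → Fin (d - 1)) : tupleSum d k a ≤ k * (d - 1) := by
  unfold tupleSum
  calc ∑ i, ((a i : ℕ) + 1) ≤ ∑ _i : Fin k, (d - 1) :=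
        Finset.sum_le_sum fun i _ => by have := (a i).isLt; omega
    _ = k * (d - 1) := by simp [Finset.sum_const, mul_comm]
lemma update_sum (d m : ℕ) (b : Fin (m + 1) → Fin (d - 1)) (j : Fin (d - 1)) :
    tupleSum d (m + 1) (Function.update b 0 j) + ((b 0 : ℕ) + 1)
      = tupleSum d (m + 1) b + ((j : ℕ) + 1) := by
  unfold tupleSum
  rw [Fin.sum_univ_succ, Fin.sum_univ_succ]
  have h1 : Function.update b 0 j 0 = j := by simp
  have h2 : ∀ i : Fin m, Function.update b 0 j i.succ = b i.succ := fun i =>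
    Function.update_of_ne (Fin.succ_ne_zero i) j b
  rw [h1]
  rw [Finset.sum_congr rfl fun i _ => by rw [h2 i]]
  ring

lemma cast_tupleSum_cons (d m : ℕ) (c : Fin (d - 1)) (b : Fin m → Fin (d - 1)) :
    ((tupleSum d (m + 1) (Fin.cons c b) : ℕ) : ℝ)
      = ((c : ℕ) : ℝ) + 1 + ((tupleSum d m b : ℕ) : ℝ) := by
  rw [tupleSum_cons]; push_cast; ring

lemma good_bound {d : ℕ} (hd2 : 2 ≤ d) (m : ℕ) (b : Fin m → Fin (d - 1))
    (hb : ¬ d ∣ tupleSum d m b) (q : ℝ) :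
    ∑ c : Fin (d - 1), |(tupleSum d (m + 1) (Fin.cons c b) : ℝ) / d - q|
      ≤ ((d:ℝ) - 1) *
          |(tupleSum d (m + 1) (Fin.cons (c0fin d (tupleSum d m b) hd2) b) : ℝ) / d - q|
        + ((d:ℝ) - 1) / 2 := by
  set T := tupleSum d m b with hT
  set e := c0fin d T hd2 with he
  have hdpos : (0:ℝ) < d := by positivity
  have hkey : ∀ c : Fin (d - 1),
      |(tupleSum d (m + 1) (Fin.cons c b) : ℝ) / d - q|
        ≤ |(tupleSum d (m + 1) (Fin.cons e b) : ℝ) / d - q| + |(c : ℝ) - (e : ℝ)| / d := by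
    intro c
    have h1 := abs_sub_le ((tupleSum d (m + 1) (Fin.cons c b) : ℝ) / d)
      ((tupleSum d (m + 1) (Fin.cons e b) : ℝ) / d) q
    have h2 : |(tupleSum d (m + 1) (Fin.cons c b) : ℝ) / d
        - (tupleSum d (m + 1) (Fin.cons e b) : ℝ) / d| = |(c : ℝ) - (e : ℝ)| / d := by
      rw [cast_tupleSum_cons, cast_tupleSum_cons]
      rw [div_sub_div_same]
      have h3 : ((c:ℕ):ℝ) + 1 + (T:ℝ) - (((e:ℕ):ℝ) + 1 + (T:ℝ)) = ((c:ℕ):ℝ) - ((e:ℕ):ℝ) := by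
        ring
      rw [h3, abs_div, abs_of_pos hdpos]
    rw [h2] at h1
    linarith [h1]
  calc ∑ c : Fin (d - 1), |(tupleSum d (m + 1) (Fin.cons c b) : ℝ) / d - q|
      ≤ ∑ c : Fin (d - 1),
          (|(tupleSum d (m + 1) (Fin.cons e b) : ℝ) / d - q| + |(c : ℝ) - (e : ℝ)| / d) :=
        Finset.sum_le_sum fun c _ => hkey c
    _ = ((d - 1 : ℕ):ℝ) * |(tupleSum d (m + 1) (Fin.cons e b) : ℝ) / d - q|
          + (∑ c : Fin (d - 1), |(c : ℝ) - (e : ℝ)|) / d := by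
        rw [Finset.sum_add_distrib, Finset.sum_const, Finset.card_univ, Fintype.card_fin,
          nsmul_eq_mul, ← Finset.sum_div]
    _ ≤ ((d:ℝ) - 1) * |(tupleSum d (m + 1) (Fin.cons e b) : ℝ) / d - q| + ((d:ℝ) - 1) / 2 := by
        have hc1 : ((d - 1 : ℕ):ℝ) = (d:ℝ) - 1 := by
          push_cast [Nat.cast_sub (by omega : 1 ≤ d)]; ring
        rw [hc1]
        have h4 := sum_abs_fin d hd2 e
        have h5 : (∑ c : Fin (d - 1), |(c : ℝ) - (e : ℝ)|) / d
            ≤ (((d:ℝ) - 1) * ((d:ℝ) - 2) / 2) / d := by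
          gcongr
        have h6 : (((d:ℝ) - 1) * ((d:ℝ) - 2) / 2) / d ≤ ((d:ℝ) - 1) / 2 := by
          rw [div_le_div_iff₀ hdpos (by norm_num : (0:ℝ) < 2)]
          nlinarith [hdpos]
        linarith

lemma bad_bound {d : ℕ} (hd2 : 2 ≤ d) (m : ℕ) (b : Fin m → Fin (d - 1)) (q : ℝ) :
    ∑ c : Fin (d - 1), |(tupleSum d (m + 1) (Fin.cons c b) : ℝ) / d - q|
      ≤ ((d:ℝ) - 1) * |(tupleSum d m b : ℝ) / d - q| + ((d:ℝ) - 1) / 2 := by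
  set T := tupleSum d m b with hT
  have hdpos : (0:ℝ) < d := by positivity
  have hkey : ∀ c : Fin (d - 1),
      |(tupleSum d (m + 1) (Fin.cons c b) : ℝ) / d - q|
        ≤ |(T : ℝ) / d - q| + (((c:ℕ) : ℝ) + 1) / d := by
    intro c
    have h1 := abs_sub_le ((tupleSum d (m + 1) (Fin.cons c b) : ℝ) / d) ((T : ℝ) / d) q
    have h2 : |(tupleSum d (m + 1) (Fin.cons c b) : ℝ) / d - (T : ℝ) / d|
        = (((c:ℕ) : ℝ) + 1) / d := by
      rw [cast_tupleSum_cons, div_sub_div_same]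
      have h3 : ((c:ℕ):ℝ) + 1 + (T:ℝ) - (T:ℝ) = ((c:ℕ):ℝ) + 1 := by ring
      rw [h3, abs_div, abs_of_pos hdpos, abs_of_pos (by positivity)]
    rw [h2] at h1
    linarith [h1]
  calc ∑ c : Fin (d - 1), |(tupleSum d (m + 1) (Fin.cons c b) : ℝ) / d - q|
      ≤ ∑ c : Fin (d - 1), (|(T : ℝ) / d - q| + (((c:ℕ) : ℝ) + 1) / d) :=
        Finset.sum_le_sum fun c _ => hkey c
    _ = ((d - 1 : ℕ):ℝ) * |(T : ℝ) / d - q|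
          + (∑ c : Fin (d - 1), (((c:ℕ) : ℝ) + 1)) / d := by
        rw [Finset.sum_add_distrib, Finset.sum_const, Finset.card_univ, Fintype.card_fin,
          nsmul_eq_mul, ← Finset.sum_div]
    _ ≤ ((d:ℝ) - 1) * |(T : ℝ) / d - q| + ((d:ℝ) - 1) / 2 := by
        have hc1 : ((d - 1 : ℕ):ℝ) = (d:ℝ) - 1 := by
          push_cast [Nat.cast_sub (by omega : 1 ≤ d)]; ring
        rw [hc1, sum_vals d hd2]
        have h6 : (((d:ℝ) - 1) * (d:ℝ) / 2) / d = ((d:ℝ) - 1) / 2 := by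
          field_simp
        rw [h6]

lemma inner_ite_eval {d : ℕ} (hd2 : 2 ≤ d) {m : ℕ} (b : Fin m → Fin (d - 1))
    (f : Fin (d - 1) → ℝ) :
    (∑ c : Fin (d - 1), if d ∣ tupleSum d (m + 1) (Fin.cons c b) then f c else 0)
      = if d ∣ tupleSum d m b then 0 else f (c0fin d (tupleSum d m b) hd2) := by
  have hrw : ∀ c : Fin (d - 1),
      (if d ∣ tupleSum d (m + 1) (Fin.cons c b) then f c else 0)
        = (if d ∣ ((c:ℕ) + 1 + tupleSum d m b) then f c else 0) := fun c => by
    rw [tupleSum_cons]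
  rw [Finset.sum_congr rfl fun c _ => hrw c]
  by_cases hb : d ∣ tupleSum d m b
  · rw [if_pos hb]
    exact Finset.sum_eq_zero fun c _ => if_neg (no_ext hd2 _ hb c)
  · rw [if_neg hb]
    simp only [dvd_iff_c0 hd2 _ hb]
    rw [Finset.sum_ite_eq']
    simp


set_option maxHeartbeats 1000000 in
lemma inj_bound {d : ℕ} (hd2 : 2 ≤ d) (l : ℕ) (q : ℝ) :
    ((d:ℝ) - 2) * (∑ b ∈ intTuples d (l+1), |(tupleSum d (l+1) b : ℝ) / d - q|)
      ≤ (∑ a ∈ intTuples d (l+2), |(tupleSum d (l+2) a : ℝ) / d - q|)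
        + 2 * ((d:ℝ) - 2) * ((intTuples d (l+1)).card : ℝ) := by
  classical
  have hdpos : (0:ℝ) < d := by positivity
  set P : Finset ((Fin (l+1) → Fin (d-1)) × Fin (d-1)) :=
    (intTuples d (l+1) ×ˢ Finset.univ).filter (fun p => p.2 ≠ p.1 0) with hP
  set φ : ((Fin (l+1) → Fin (d-1)) × Fin (d-1)) → (Fin (l+2) → Fin (d-1)) :=
    fun p => Fin.cons (c0fin d (tupleSum d (l+1) (Function.update p.1 0 p.2)) hd2)
      (Function.update p.1 0 p.2) with hφ
  have hmemP : ∀ p ∈ P, d ∣ tupleSum d (l+1) p.1 ∧ p.2 ≠ p.1 0 := by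
    intro p hp
    rw [hP, Finset.mem_filter, Finset.mem_product] at hp
    obtain ⟨⟨hp1, -⟩, hp2⟩ := hp
    rw [intTuples, Finset.mem_filter] at hp1
    exact ⟨hp1.2, hp2⟩
  -- the modified prefix sum is not divisible
  have fnd : ∀ p ∈ P, ¬ d ∣ tupleSum d (l+1) (Function.update p.1 0 p.2) := by
    intro p hp hdvd
    obtain ⟨hp1, hp2⟩ := hmemP p hp
    have hu := update_sum d l p.1 p.2
    have hz1 : (d:ℤ) ∣ (tupleSum d (l+1) p.1 : ℤ) := Int.natCast_dvd_natCast.mpr hp1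
    have hz2 : (d:ℤ) ∣ (tupleSum d (l+1) (Function.update p.1 0 p.2) : ℤ) :=
      Int.natCast_dvd_natCast.mpr hdvd
    have huZ : (tupleSum d (l+1) (Function.update p.1 0 p.2) : ℤ) + ((p.1 0 : ℕ) : ℤ) + 1
        = (tupleSum d (l+1) p.1 : ℤ) + ((p.2 : ℕ) : ℤ) + 1 := by exact_mod_cast congrArg (Nat.cast : ℕ → ℤ) hu
    have hdiff : (d:ℤ) ∣ (((p.2 : ℕ) : ℤ) - ((p.1 0 : ℕ) : ℤ)) := by
      have h3 : (((p.2 : ℕ) : ℤ) - ((p.1 0 : ℕ) : ℤ))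
          = (tupleSum d (l+1) (Function.update p.1 0 p.2) : ℤ) - (tupleSum d (l+1) p.1 : ℤ) := by
        linarith [huZ]
      rw [h3]
      exact dvd_sub hz2 hz1
    have hne : (((p.2 : ℕ) : ℤ) - ((p.1 0 : ℕ) : ℤ)) ≠ 0 := by
      intro h0
      apply hp2
      apply Fin.ext
      have : ((p.2 : ℕ) : ℤ) = ((p.1 0 : ℕ) : ℤ) := by linarith [h0]
      exact_mod_cast this
    have hlt1 : ((p.2 : ℕ) : ℤ) < d := by exact_mod_cast lt_of_lt_of_le p.2.isLt (by omega)
    have hlt2 : ((p.1 0 : ℕ) : ℤ) < d := by exact_mod_cast lt_of_lt_of_le (p.1 0).isLt (by omega)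
    have hge1 : (0:ℤ) ≤ ((p.2 : ℕ) : ℤ) := Int.natCast_nonneg _
    have hge2 : (0:ℤ) ≤ ((p.1 0 : ℕ) : ℤ) := Int.natCast_nonneg _
    have habs : |(((p.2 : ℕ) : ℤ) - ((p.1 0 : ℕ) : ℤ))| < d := abs_lt.mpr ⟨by linarith, by linarith⟩
    have := Int.le_of_dvd (abs_pos.mpr hne) ((dvd_abs _ _).mpr hdiff)
    linarith
  have fmem : ∀ p ∈ P, φ p ∈ intTuples d (l+2) := by
    intro p hp
    rw [intTuples, Finset.mem_filter]
    refine ⟨Finset.mem_univ _, ?_⟩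
    rw [hφ]
    show d ∣ tupleSum d (l+1+1) (Fin.cons _ _)
    rw [tupleSum_cons, c0fin_val hd2 _ (fnd p hp)]
    exact c0_dvd hd2 _ (fnd p hp)
  have fh : ∀ p ∈ P, |(tupleSum d (l+1) p.1 : ℝ) / d - q| - 2
      ≤ |(tupleSum d (l+2) (φ p) : ℝ) / d - q| := by
    intro p hp
    have hu := update_sum d l p.1 p.2
    have hSeq : tupleSum d (l+2) (φ p)
        = (c0fin d (tupleSum d (l+1) (Function.update p.1 0 p.2)) hd2 : ℕ) + 1
          + tupleSum d (l+1) (Function.update p.1 0 p.2) := by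
      rw [hφ]
      show tupleSum d (l+1+1) (Fin.cons _ _) = _
      rw [tupleSum_cons]
    have hb1 : (c0fin d (tupleSum d (l+1) (Function.update p.1 0 p.2)) hd2 : ℕ) ≤ d - 2 := by
      have := (c0fin d (tupleSum d (l+1) (Function.update p.1 0 p.2)) hd2).isLt
      omega
    have hb2 : (p.2 : ℕ) ≤ d - 2 := by have := p.2.isLt; omega
    have hb3 : (p.1 0 : ℕ) ≤ d - 2 := by have := (p.1 0).isLt; omega
    have hZ : (tupleSum d (l+2) (φ p) : ℤ) - (tupleSum d (l+1) p.1 : ℤ)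
        = ((c0fin d (tupleSum d (l+1) (Function.update p.1 0 p.2)) hd2 : ℕ) : ℤ) + 1
          + ((p.2 : ℕ) : ℤ) - ((p.1 0 : ℕ) : ℤ) := by
      have h1 := congrArg (Nat.cast : ℕ → ℤ) hSeq
      have h2 := congrArg (Nat.cast : ℕ → ℤ) hu
      push_cast at h1 h2
      linarith
    have hub1 : (tupleSum d (l+2) (φ p) : ℤ) - (tupleSum d (l+1) p.1 : ℤ) ≤ 2 * (d:ℤ) := by
      omega
    have hub2 : -(2 * (d:ℤ)) ≤ (tupleSum d (l+2) (φ p) : ℤ) - (tupleSum d (l+1) p.1 : ℤ) := by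
      omega
    have hub1R : (tupleSum d (l+2) (φ p) : ℝ) - (tupleSum d (l+1) p.1 : ℝ) ≤ 2 * (d:ℝ) := by
      exact_mod_cast hub1
    have hub2R : -(2 * (d:ℝ)) ≤ (tupleSum d (l+2) (φ p) : ℝ) - (tupleSum d (l+1) p.1 : ℝ) := by
      exact_mod_cast hub2
    have habs2 : |(tupleSum d (l+1) p.1 : ℝ) / d - (tupleSum d (l+2) (φ p) : ℝ) / d| ≤ 2 := by
      rw [div_sub_div_same, abs_div, abs_of_pos hdpos, div_le_iff₀ hdpos]
      rw [abs_le]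
      constructor <;> nlinarith [hub1R, hub2R]
    have htri := abs_sub_le ((tupleSum d (l+1) p.1 : ℝ) / d)
      ((tupleSum d (l+2) (φ p) : ℝ) / d) q
    linarith
  have finj : ∀ p ∈ P, ∀ p' ∈ P, φ p = φ p' → p = p' := by
    intro p hp p' hp' heq
    have ht : Function.update p.1 0 p.2 = Function.update p'.1 0 p'.2 := by
      funext i
      have := congrFun heq i.succ
      rw [hφ] at this
      simpa [Fin.cons_succ] using this
    have hj : p.2 = p'.2 := by
      have := congrFun ht 0
      simpa [Function.update_self] using this
    have hoff : ∀ i : Fin (l+1), i ≠ 0 → p.1 i = p'.1 i := by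
      intro i hi
      have := congrFun ht i
      simpa [Function.update_of_ne hi] using this
    have hhead : c0fin d (tupleSum d (l+1) (Function.update p.1 0 p.2)) hd2
        = c0fin d (tupleSum d (l+1) (Function.update p'.1 0 p'.2)) hd2 := by
      have := congrFun heq (0 : Fin (l+2))
      rw [hφ] at this
      simpa [Fin.cons_zero] using this
    have hval : c0 d (tupleSum d (l+1) (Function.update p.1 0 p.2))
        = c0 d (tupleSum d (l+1) (Function.update p'.1 0 p'.2)) := by
      have h1 := c0fin_val hd2 _ (fnd p hp)
      have h2 := c0fin_val hd2 _ (fnd p' hp')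
      rw [← h1, ← h2, hhead]
    have hmod : tupleSum d (l+1) (Function.update p.1 0 p.2) % d
        = tupleSum d (l+1) (Function.update p'.1 0 p'.2) % d := by
      have hm1 : tupleSum d (l+1) (Function.update p.1 0 p.2) % d < d := Nat.mod_lt _ (by omega)
      have hm2 : tupleSum d (l+1) (Function.update p'.1 0 p'.2) % d < d := Nat.mod_lt _ (by omega)
      have hn1 : tupleSum d (l+1) (Function.update p.1 0 p.2) % d ≠ 0 :=
        fun h => (fnd p hp) (Nat.dvd_of_mod_eq_zero h)
      have hn2 : tupleSum d (l+1) (Function.update p'.1 0 p'.2) % d ≠ 0 :=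
        fun h => (fnd p' hp') (Nat.dvd_of_mod_eq_zero h)
      unfold c0 at hval
      omega
    have hdvd : (d:ℤ) ∣ ((tupleSum d (l+1) (Function.update p'.1 0 p'.2) : ℤ)
        - (tupleSum d (l+1) (Function.update p.1 0 p.2) : ℤ)) :=
      (Nat.modEq_iff_dvd).mp hmod
    obtain ⟨hp1, -⟩ := hmemP p hp
    obtain ⟨hp1', -⟩ := hmemP p' hp'
    have hu := update_sum d l p.1 p.2
    have hu' := update_sum d l p'.1 p'.2
    have huZ := congrArg (Nat.cast : ℕ → ℤ) hu
    have huZ' := congrArg (Nat.cast : ℕ → ℤ) hu'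
    push_cast at huZ huZ'
    have hz1 : (d:ℤ) ∣ (tupleSum d (l+1) p.1 : ℤ) := Int.natCast_dvd_natCast.mpr hp1
    have hz1' : (d:ℤ) ∣ (tupleSum d (l+1) p'.1 : ℤ) := Int.natCast_dvd_natCast.mpr hp1'
    have hb0 : (d:ℤ) ∣ (((p.1 0 : ℕ) : ℤ) - ((p'.1 0 : ℕ) : ℤ)) := by
      have h5 : (((p.1 0 : ℕ) : ℤ) - ((p'.1 0 : ℕ) : ℤ))
          = ((tupleSum d (l+1) (Function.update p'.1 0 p'.2) : ℤ)
              - (tupleSum d (l+1) (Function.update p.1 0 p.2) : ℤ))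
            + ((tupleSum d (l+1) p.1 : ℤ) - (tupleSum d (l+1) p'.1 : ℤ))
            + (((p.2 : ℕ) : ℤ) - ((p'.2 : ℕ) : ℤ)) := by
        linarith [huZ, huZ']
      rw [h5]
      refine dvd_add (dvd_add hdvd (dvd_sub hz1 hz1')) ?_
      rw [hj]
      simp
    have hb0eq : p.1 0 = p'.1 0 := by
      have hlt1 : ((p.1 0 : ℕ) : ℤ) < d := by exact_mod_cast lt_of_lt_of_le (p.1 0).isLt (by omega)
      have hlt2 : ((p'.1 0 : ℕ) : ℤ) < d := by exact_mod_cast lt_of_lt_of_le (p'.1 0).isLt (by omega)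
      have hge1 : (0:ℤ) ≤ ((p.1 0 : ℕ) : ℤ) := Int.natCast_nonneg _
      have hge2 : (0:ℤ) ≤ ((p'.1 0 : ℕ) : ℤ) := Int.natCast_nonneg _
      by_contra hne
      have hne' : (((p.1 0 : ℕ) : ℤ) - ((p'.1 0 : ℕ) : ℤ)) ≠ 0 := by
        intro h0
        apply hne
        apply Fin.ext
        have : ((p.1 0 : ℕ) : ℤ) = ((p'.1 0 : ℕ) : ℤ) := by linarith
        exact_mod_cast this
      have := Int.le_of_dvd (abs_pos.mpr hne') ((dvd_abs _ _).mpr hb0)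
      have habs : |(((p.1 0 : ℕ) : ℤ) - ((p'.1 0 : ℕ) : ℤ))| < d := abs_lt.mpr ⟨by linarith, by linarith⟩
      linarith
    have hfst : p.1 = p'.1 := by
      funext i
      by_cases hi : i = 0
      · rw [hi]; exact hb0eq
      · exact hoff i hi
    exact Prod.ext hfst hj
  -- sum over P
  have himg : ∑ p ∈ P, (|(tupleSum d (l+1) p.1 : ℝ) / d - q| - 2)
      ≤ ∑ a ∈ intTuples d (l+2), |(tupleSum d (l+2) a : ℝ) / d - q| := by
    calc ∑ p ∈ P, (|(tupleSum d (l+1) p.1 : ℝ) / d - q| - 2)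
        ≤ ∑ p ∈ P, |(tupleSum d (l+2) (φ p) : ℝ) / d - q| :=
          Finset.sum_le_sum fun p hp => by linarith [fh p hp]
      _ = ∑ a ∈ P.image φ, |(tupleSum d (l+2) a : ℝ) / d - q| :=
          (Finset.sum_image (f := fun a => |(tupleSum d (l+2) a : ℝ) / d - q|) finj).symm
      _ ≤ ∑ a ∈ intTuples d (l+2), |(tupleSum d (l+2) a : ℝ) / d - q| := by
          apply Finset.sum_le_sum_of_subset_of_nonneg
          · intro a ha
            rw [Finset.mem_image] at ha
            obtain ⟨p, hp, rfl⟩ := ha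
            exact fmem p hp
          · intro a _ _
            exact abs_nonneg _
  have hPsum : ∑ p ∈ P, (|(tupleSum d (l+1) p.1 : ℝ) / d - q| - 2)
      = ((d:ℝ) - 2) * (∑ b ∈ intTuples d (l+1), |(tupleSum d (l+1) b : ℝ) / d - q|)
        - 2 * ((d:ℝ) - 2) * ((intTuples d (l+1)).card : ℝ) := by
    rw [hP, Finset.sum_filter, Finset.sum_product]
    have hinner : ∀ b : Fin (l+1) → Fin (d-1),
        (∑ j : Fin (d-1), if j ≠ b 0 then (|(tupleSum d (l+1) b : ℝ) / d - q| - 2) else 0)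
          = ((d:ℝ) - 2) * (|(tupleSum d (l+1) b : ℝ) / d - q| - 2) := by
      intro b
      rw [← Finset.sum_filter, Finset.filter_ne', Finset.sum_const,
        Finset.card_erase_of_mem (Finset.mem_univ _), Finset.card_univ, Fintype.card_fin,
        nsmul_eq_mul]
      congr 1
      have : ((d - 1 - 1 : ℕ) : ℝ) = (d:ℝ) - 2 := by
        push_cast [Nat.cast_sub (by omega : 1 ≤ d - 1), Nat.cast_sub (by omega : 1 ≤ d)]
        ring
      exact this
    rw [Finset.sum_congr rfl fun b _ => hinner b]
    rw [Finset.mul_sum]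
    rw [Finset.sum_congr rfl fun b _ => mul_sub ((d:ℝ) - 2) _ 2]
    rw [Finset.sum_sub_distrib, Finset.sum_const, nsmul_eq_mul]
    ring
  linarith [himg, hPsum]

lemma final_arith (Dr N C W C2 Np M : ℝ)
    (hdR : (499999:ℝ) ≤ Dr)
    (hN0 : 0 ≤ N) (hW0 : 0 ≤ W) (hNp0 : 0 ≤ Np) (hC0 : 0 ≤ C) (hC20 : 0 ≤ C2)
    (hCC2 : C + C2 = M) (hC2b1 : M - (Dr+1) ≤ (Dr+1) * C2) (hC2b2 : (Dr+1) * C2 ≤ M + (Dr+1))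
    (hCpos : 0 < C) (hM2 : Dr^2 ≤ M)
    (hNle : 2 * N ≤ (Dr+1) * C)
    (hWle : W ≤ Dr * (N + Np + M / 2))
    (hInj : (Dr - 1) * Np ≤ N + 2 * (Dr - 1) * C2) :
    (1 - 1/M) * (W / (M * Dr)) - 1 ≤ N / C := by
  have hdpos : (0:ℝ) < Dr := by linarith
  have hMpos : (0:ℝ) < M := by nlinarith
  have hd2R : (0:ℝ) < Dr - 1 := by linarith
  have star : Np * C ≤ N * C2 + C * M / 2 := by
    have hA : (Dr - 1) * Np * C ≤ (N + 2 * (Dr - 1) * C2) * C :=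
      mul_le_mul_of_nonneg_right hInj hC0
    have hT : N * C + 2 * (Dr - 1) * C2 * C ≤ (Dr - 1) * (N * C2 + C * M / 2) := by
      have t1 : 0 ≤ N * ((Dr+1) * C2 - M + (Dr+1)) := mul_nonneg hN0 (by linarith)
      have t2 : 0 ≤ C * (M + (Dr+1) - (Dr+1) * C2) := mul_nonneg hC0 (by linarith)
      have t3 : 0 ≤ ((Dr+1) * C - 2 * N) * (M + (Dr+1)^2) :=
        mul_nonneg (by linarith) (by nlinarith)
      have t4 : 0 ≤ C * (M - 2*(Dr+1) - 8) := mul_nonneg hC0 (by nlinarith)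
      nlinarith [t1, t2, t3, t4, mul_nonneg hN0 hC20, mul_nonneg hC0 hC20,
        mul_nonneg (mul_nonneg hC0 hC20) hdpos.le, sq_nonneg Dr,
        mul_nonneg hC0 hMpos.le, mul_nonneg (mul_nonneg hC0 hMpos.le) hdpos.le]
    have hB : (Dr - 1) * (Np * C) ≤ (Dr - 1) * (N * C2 + C * M / 2) := by
      nlinarith [hA, hT]
    exact le_of_mul_le_mul_left hB hd2R
  have key2 : (N + Np + M / 2) * C ≤ (N + C) * M := by
    have hid : N * C + N * C2 = N * M := by rw [← hCC2]; ring
    nlinarith [star, hid]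
  have keyW : W * C ≤ (N + C) * (M * Dr) := by
    have k1 : W * C ≤ (Dr * (N + Np + M / 2)) * C := mul_le_mul_of_nonneg_right hWle hC0
    have k2 : (Dr * (N + Np + M / 2)) * C ≤ Dr * ((N + C) * M) := by
      have hk := mul_le_mul_of_nonneg_left key2 hdpos.le
      calc (Dr * (N + Np + M / 2)) * C = Dr * ((N + Np + M / 2) * C) := by ring
        _ ≤ Dr * ((N + C) * M) := hk
    have k3 : Dr * ((N + C) * M) = (N + C) * (M * Dr) := by ring
    linarith
  have hpow : (0:ℝ) < M * Dr := by positivity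
  have h1 : W / (M * Dr) ≤ N / C + 1 := by
    have h0 : W / (M * Dr) ≤ (N + C) / C := by
      rw [div_le_div_iff₀ hpow hCpos]; linarith [keyW]
    have h2 : (N + C) / C = N / C + 1 := by field_simp
    linarith
  have hWnn : 0 ≤ W / (M * Dr) := by positivity
  have h3 : (1 - 1/M) * (W / (M * Dr)) ≤ W / (M * Dr) := by
    have h5 : 0 ≤ (1/M) * (W / (M * Dr)) := by positivity
    calc (1 - 1/M) * (W / (M * Dr)) = W / (M * Dr) - (1/M) * (W / (M * Dr)) := by ring
      _ ≤ W / (M * Dr) := by linarith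
  linarith

end Stmt13


open Stmt13 in
/-- For `d ≥ n ≥ 500000`,
`E[|Z_d(n) − n/2|] ≥ (1 − 1/(d−1)^{n−1}) · E[|Y_d(n) − n/2|] − 1`, where `Y_d(n)`
is the sum of `n` i.i.d. uniforms on `{1/d, …, (d−1)/d}` and `Z_d(n)` is `Y_d(n)`
conditioned on being an integer. -/
theorem stmt_13 (d n : ℕ) (hnd : n ≤ d) (hn : 500000 ≤ n) :
    (∑ a ∈ intTuples d n, |(tupleSum d n a : ℝ) / d - (n : ℝ) / 2|)
        / ((intTuples d n).card : ℝ)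
    ≥ (1 - 1 / ((d : ℝ) - 1) ^ (n - 1)) *
        ((∑ a : Fin n → Fin (d - 1), |(tupleSum d n a : ℝ) / d - (n : ℝ) / 2|)
          / ((d : ℝ) - 1) ^ n)
      - 1 := by
  obtain ⟨l, rfl⟩ : ∃ l, n = l + 2 := ⟨n - 2, by omega⟩
  have hd2 : 2 ≤ d := by omega
  have hdR : (500000:ℝ) ≤ (d:ℝ) := by exact_mod_cast (by omega : 500000 ≤ d)
  have hnR : ((l:ℝ) + 2) ≤ (d:ℝ) := by exact_mod_cast hnd
  have hdpos : (0:ℝ) < d := by linarith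
  -- abbreviations
  set g : (Fin (l + 2) → Fin (d - 1)) → ℝ :=
    fun a => |(tupleSum d (l + 2) a : ℝ) / d - ((l + 2 : ℕ) : ℝ) / 2| with hg
  set h : (Fin (l + 1) → Fin (d - 1)) → ℝ :=
    fun b => |(tupleSum d (l + 1) b : ℝ) / d - ((l + 2 : ℕ) : ℝ) / 2| with hh
  set N : ℝ := ∑ a ∈ intTuples d (l + 2), g a with hN
  set C : ℝ := ((intTuples d (l + 2)).card : ℝ) with hC
  set W : ℝ := ∑ a : Fin (l + 2) → Fin (d - 1), g a with hW
  set C2 : ℝ := ((intTuples d (l + 1)).card : ℝ) with hC2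
  set Np : ℝ := ∑ b ∈ intTuples d (l + 1), h b with hNp
  set M : ℝ := ((d : ℝ) - 1) ^ (l + 1) with hM
  have hcast1 : ((d - 1 : ℕ) : ℝ) = (d:ℝ) - 1 := by
    push_cast [Nat.cast_sub (by omega : 1 ≤ d)]; ring
  -- nonnegativity
  have hg0 : ∀ a, 0 ≤ g a := fun a => abs_nonneg _
  have hh0 : ∀ b, 0 ≤ h b := fun b => abs_nonneg _
  have hN0 : 0 ≤ N := Finset.sum_nonneg fun a _ => hg0 a
  have hW0 : 0 ≤ W := Finset.sum_nonneg fun a _ => hg0 a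
  have hNp0 : 0 ≤ Np := Finset.sum_nonneg fun b _ => hh0 b
  have hC0 : 0 ≤ C := by positivity
  have hC20 : 0 ≤ C2 := by positivity
  have hDr1 : (1:ℝ) ≤ (d:ℝ) - 1 := by linarith
  have hMpos : (0:ℝ) < M := by positivity
  have h1d : 1 ≤ d := by omega
  -- counting facts
  have hCC2 : C + C2 = M := by
    have hcr := card_rec hd2 (l + 1)
    have hcc := congrArg (Nat.cast : ℕ → ℝ) hcr
    push_cast [Nat.cast_sub h1d] at hcc
    rw [hC, hC2, hM]
    push_cast
    linarith [hcc]
  have hsgn : ∀ k : ℕ, ((-1:ℝ))^k = 1 ∨ ((-1:ℝ))^k = -1 := fun k => by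
    rcases Nat.even_or_odd k with hk | hk
    · exact Or.inl hk.neg_one_pow
    · exact Or.inr hk.neg_one_pow
  have hciR : (d:ℝ) * C2 = ((d:ℝ) - 1)^(l+1) + (-1:ℝ)^(l+1) * ((d:ℝ) - 1) := by
    have hci := card_int hd2 (l + 1)
    have := congrArg (Int.cast : ℤ → ℝ) hci
    push_cast at this
    rw [hC2]
    push_cast
    linarith [this]
  have hC2b1 : M - d ≤ d * C2 := by
    rcases hsgn (l+1) with hs | hs <;> rw [hs] at hciR <;> rw [hM] <;> linarith
  have hC2b2 : d * C2 ≤ M + d := by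
    rcases hsgn (l+1) with hs | hs <;> rw [hs] at hciR <;> rw [hM] <;> linarith
  have hM2 : ((d:ℝ) - 1) ^ 2 ≤ M := by
    rw [hM]
    exact pow_le_pow_right₀ hDr1 (by omega)
  have hCpos : (0:ℝ) < C := by
    rw [hC]
    exact_mod_cast card_pos (by omega : 3 ≤ d) (by omega : 2 ≤ l + 2)
  -- per-tuple bound
  have hNle : 2 * N ≤ (d:ℝ) * C := by
    have hb : ∀ a ∈ intTuples d (l + 2), g a ≤ ((l + 2 : ℕ):ℝ) / 2 := by
      intro a _
      rw [hg]
      have hS1 : (0:ℝ) ≤ (tupleSum d (l+2) a : ℝ) / d := by positivity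
      have hS2 : (tupleSum d (l+2) a : ℝ) / d ≤ ((l + 2 : ℕ):ℝ) := by
        rw [div_le_iff₀ hdpos]
        have h1 := tupleSum_le d (l+2) a
        have h3 : (l+2) * (d-1) ≤ (l+2) * d := Nat.mul_le_mul_left _ (by omega)
        have h2 : tupleSum d (l+2) a ≤ (l+2) * d := le_trans h1 h3
        exact_mod_cast h2
      rw [abs_le]
      constructor <;> [linarith; linarith]
    have hgb : N ≤ C * (((l + 2 : ℕ):ℝ) / 2) := by
      rw [hN, hC]
      calc ∑ a ∈ intTuples d (l + 2), g a
          ≤ ∑ _a ∈ intTuples d (l + 2), ((l + 2 : ℕ):ℝ) / 2 := Finset.sum_le_sum hb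
        _ = ((intTuples d (l + 2)).card : ℝ) * (((l + 2 : ℕ):ℝ) / 2) := by
            rw [Finset.sum_const, nsmul_eq_mul]
    have hld : ((l + 2 : ℕ):ℝ) ≤ (d:ℝ) := by exact_mod_cast hnd
    calc 2 * N ≤ 2 * (C * (((l + 2 : ℕ):ℝ) / 2)) := by linarith
      _ = C * ((l + 2 : ℕ):ℝ) := by ring
      _ ≤ C * (d:ℝ) := mul_le_mul_of_nonneg_left hld hC0
      _ = (d:ℝ) * C := mul_comm _ _
  -- structural bound on W
  have hWle : W ≤ ((d:ℝ) - 1) * (N + Np + M / 2) := by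
    have hWs : W = ∑ b : Fin (l+1) → Fin (d-1), ∑ c : Fin (d-1), g (Fin.cons c b) := by
      rw [hW]; exact sum_pi_succ (d-1) (l+1) g
    have hNs : N = ∑ b : Fin (l+1) → Fin (d-1),
        (if d ∣ tupleSum d (l+1) b then 0
         else g (Fin.cons (c0fin d (tupleSum d (l+1) b) hd2) b)) := by
      rw [hN]
      unfold intTuples
      rw [Finset.sum_filter]
      rw [sum_pi_succ (d-1) (l+1) (fun a => if d ∣ tupleSum d (l+2) a then g a else 0)]
      exact Finset.sum_congr rfl fun b _ => inner_ite_eval hd2 b (fun c => g (Fin.cons c b))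
    have hNps : Np = ∑ b : Fin (l+1) → Fin (d-1),
        (if d ∣ tupleSum d (l+1) b then h b else 0) := by
      rw [hNp]
      unfold intTuples
      rw [Finset.sum_filter]
    have hperb : ∀ b : Fin (l+1) → Fin (d-1),
        ∑ c : Fin (d-1), g (Fin.cons c b)
          ≤ ((d:ℝ)-1) * ((if d ∣ tupleSum d (l+1) b then 0
                else g (Fin.cons (c0fin d (tupleSum d (l+1) b) hd2) b))
              + (if d ∣ tupleSum d (l+1) b then h b else 0))
            + ((d:ℝ)-1)/2 := by
      intro b
      by_cases hb : d ∣ tupleSum d (l+1) b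
      · rw [if_pos hb, if_pos hb, zero_add]
        simp only [hg, hh]
        exact bad_bound hd2 (l+1) b (((l+2 : ℕ):ℝ)/2)
      · rw [if_neg hb, if_neg hb, add_zero]
        simp only [hg]
        exact good_bound hd2 (l+1) b hb (((l+2 : ℕ):ℝ)/2)
    have hMcard : ((Finset.univ : Finset (Fin (l+1) → Fin (d-1))).card : ℝ) = M := by
      rw [Finset.card_univ, Fintype.card_fun, Fintype.card_fin, Fintype.card_fin, hM]
      push_cast [Nat.cast_sub h1d]
      ring
    calc W = ∑ b : Fin (l+1) → Fin (d-1), ∑ c : Fin (d-1), g (Fin.cons c b) := hWs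
      _ ≤ ∑ b : Fin (l+1) → Fin (d-1),
            (((d:ℝ)-1) * ((if d ∣ tupleSum d (l+1) b then 0
                else g (Fin.cons (c0fin d (tupleSum d (l+1) b) hd2) b))
              + (if d ∣ tupleSum d (l+1) b then h b else 0))
            + ((d:ℝ)-1)/2) := Finset.sum_le_sum fun b _ => hperb b
      _ = ((d:ℝ) - 1) * (N + Np + M / 2) := by
          rw [Finset.sum_add_distrib, Finset.sum_const, nsmul_eq_mul, hMcard]
          rw [← Finset.mul_sum, Finset.sum_add_distrib]
          rw [← hNs, ← hNps]
          ring
  -- injection bound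
  have hInj : ((d:ℝ) - 2) * Np ≤ N + 2 * ((d:ℝ) - 2) * C2 := by
    rw [hNp, hN, hC2]
    simp only [hh, hg]
    exact inj_bound hd2 l (((l + 2 : ℕ):ℝ) / 2)
  -- conclude
  have hexp : l + 2 - 1 = l + 1 := rfl
  rw [ge_iff_le, hexp]
  have hpow2 : ((d:ℝ) - 1) ^ (l + 2) = M * ((d:ℝ) - 1) := by rw [hM, pow_succ]
  rw [hpow2, ← hM]
  have hDrb : (499999:ℝ) ≤ (d:ℝ) - 1 := by linarith
  exact final_arith ((d:ℝ) - 1) N C W C2 Np M hDrb hN0 hW0 hNp0 hC0 hC20 hCC2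
    (by linarith) (by linarith) hCpos hM2 (by linarith) hWle (by linarith)
end

section
/- For d ≥ n ≥ 500000, the variance of Z'_d(n) satisfies Var(Z'_d(n)) ≥ n(d−3)/(6d) − √(3n). -/
set_option maxRecDepth 2000
set_option maxHeartbeats 1000000

/-- The value of `Z'_d(n)` (sum of two independent copies of `Z_d(n)`) on a pair
of tuples. -/
noncomputable def Z' (d n : ℕ) (a b : Fin n → Fin (d - 1)) : ℝ :=
  ((tupleSum d n a : ℝ) + tupleSum d n b) / d

/-- The mean of `Z'_d(n)`. -/
noncomputable def Z'mean (d n : ℕ) : ℝ :=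
  (∑ a ∈ intTuples d n, ∑ b ∈ intTuples d n, Z' d n a b)
    / ((intTuples d n).card : ℝ) ^ 2


open Finset

noncomputable def pf (d : ℕ) (z : ℂ) : ℂ := ∑ x : Fin (d-1), z^((x:ℕ)+1)
noncomputable def ph (d : ℕ) (z : ℂ) : ℂ := ∑ x : Fin (d-1), ((x:ℕ)+1 : ℂ) * z^((x:ℕ)+1)
noncomputable def pq (d : ℕ) (z : ℂ) : ℂ := ∑ x : Fin (d-1), (((x:ℕ)+1 : ℂ))^2 * z^((x:ℕ)+1)
noncomputable def SA (d n : ℕ) (z : ℂ) : ℂ := ∑ a : Fin n → Fin (d-1), z ^ (tupleSum d n a)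
noncomputable def SB (d n : ℕ) (z : ℂ) : ℂ :=
  ∑ a : Fin n → Fin (d-1), (tupleSum d n a : ℂ) * z ^ (tupleSum d n a)
noncomputable def SC (d n : ℕ) (z : ℂ) : ℂ :=
  ∑ a : Fin n → Fin (d-1), (tupleSum d n a : ℂ)^2 * z ^ (tupleSum d n a)

lemma tupleSum_cons (d n : ℕ) (x : Fin (d-1)) (a : Fin n → Fin (d-1)) :
    tupleSum d (n+1) (Fin.cons x a) = ((x:ℕ)+1) + tupleSum d n a := by
  unfold tupleSum
  rw [Fin.sum_univ_succ]
  simp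

lemma sum_tuple_succ (d n : ℕ) (F : ℕ → ℂ) :
    ∑ a : Fin (n+1) → Fin (d-1), F (tupleSum d (n+1) a)
      = ∑ x : Fin (d-1), ∑ a : Fin n → Fin (d-1), F (((x:ℕ)+1) + tupleSum d n a) := by
  rw [← (Fin.consEquiv (fun _ : Fin (n+1) => Fin (d-1))).sum_comp
      (fun a => F (tupleSum d (n+1) a))]
  rw [Fintype.sum_prod_type]
  refine Finset.sum_congr rfl fun x _ => Finset.sum_congr rfl fun a _ => ?_
  show F (tupleSum d (n+1) (Fin.cons x a)) = _
  rw [tupleSum_cons]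

lemma tupleSum_zero (d : ℕ) (a : Fin 0 → Fin (d-1)) : tupleSum d 0 a = 0 := by
  simp [tupleSum]

lemma SA_zero (d : ℕ) (z : ℂ) : SA d 0 z = 1 := by
  simp [SA, tupleSum_zero]

lemma SB_zero (d : ℕ) (z : ℂ) : SB d 0 z = 0 := by
  simp [SB, tupleSum_zero]

lemma SC_zero (d : ℕ) (z : ℂ) : SC d 0 z = 0 := by
  simp [SC, tupleSum_zero]

lemma SA_succ (d n : ℕ) (z : ℂ) : SA d (n+1) z = pf d z * SA d n z := by
  unfold SA
  rw [sum_tuple_succ d n (fun s => z ^ s)]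
  rw [pf, Finset.sum_mul]
  refine Finset.sum_congr rfl fun x _ => ?_
  rw [Finset.mul_sum]
  refine Finset.sum_congr rfl fun a _ => ?_
  rw [pow_add]

lemma SB_succ (d n : ℕ) (z : ℂ) :
    SB d (n+1) z = pf d z * SB d n z + ph d z * SA d n z := by
  unfold SB SA pf ph
  rw [sum_tuple_succ d n (fun s => (s : ℂ) * z ^ s)]
  rw [Finset.sum_mul, Finset.sum_mul, ← Finset.sum_add_distrib]
  refine Finset.sum_congr rfl fun x _ => ?_
  rw [Finset.mul_sum, Finset.mul_sum, ← Finset.sum_add_distrib]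
  refine Finset.sum_congr rfl fun a _ => ?_
  push_cast
  rw [pow_add]
  ring

lemma SC_succ (d n : ℕ) (z : ℂ) :
    SC d (n+1) z = pf d z * SC d n z + 2 * ph d z * SB d n z + pq d z * SA d n z := by
  have L : SC d (n+1) z = ∑ x : Fin (d-1), ∑ a : Fin n → Fin (d-1),
      (((((x:ℕ)+1) + tupleSum d n a : ℕ)):ℂ)^2 * z ^ (((x:ℕ)+1) + tupleSum d n a) := by
    unfold SC
    exact sum_tuple_succ d n (fun s => (s : ℂ)^2 * z ^ s)
  rw [L]
  unfold pf ph pq SC SB SA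
  rw [mul_assoc 2, Finset.sum_mul, Finset.sum_mul, Finset.sum_mul, Finset.mul_sum,
    ← Finset.sum_add_distrib, ← Finset.sum_add_distrib]
  refine Finset.sum_congr rfl fun x _ => ?_
  simp only [Finset.mul_sum]
  rw [← Finset.sum_add_distrib, ← Finset.sum_add_distrib]
  refine Finset.sum_congr rfl fun a _ => ?_
  push_cast
  rw [pow_add]
  ring

lemma SA_eq (d n : ℕ) (z : ℂ) : SA d n z = (pf d z)^n := by
  induction n with
  | zero => simp [SA_zero]
  | succ n ih => rw [SA_succ, ih, pow_succ]; ring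

lemma SB_eq (d n : ℕ) (z : ℂ) : SB d (n+1) z = (n+1) * ph d z * (pf d z)^n := by
  induction n with
  | zero => rw [SB_succ, SB_zero, SA_zero]; ring
  | succ n ih => rw [SB_succ, ih, SA_eq, pow_succ]; push_cast; ring

lemma SC_eq (d n : ℕ) (z : ℂ) :
    SC d (n+2) z = (n+2) * pq d z * (pf d z)^(n+1)
      + (n+2)*(n+1) * (ph d z)^2 * (pf d z)^n := by
  induction n with
  | zero =>
    rw [SC_succ, SC_succ, SC_zero, SB_zero, SA_zero, SB_eq, SA_eq]
    all_goals (push_cast; try ring)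
  | succ n ih =>
    rw [SC_succ, ih, SB_eq, SA_eq, pow_succ, pow_succ]
    all_goals (push_cast; try ring)

noncomputable def rou (d : ℕ) : ℂ := Complex.exp (2 * Real.pi * Complex.I / d)

lemma rou_prim (d : ℕ) (hd : d ≠ 0) : IsPrimitiveRoot (rou d) d :=
  Complex.isPrimitiveRoot_exp d hd

lemma orth (d : ℕ) (hd : d ≠ 0) (k : ℕ) :
    ∑ c ∈ Finset.range d, (rou d)^(c*k) = if d ∣ k then (d:ℂ) else 0 := by
  have hprim := rou_prim d hd
  by_cases hdk : d ∣ k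
  · simp only [hdk, if_true]
    have h1 : ∀ c, (rou d)^(c*k) = 1 := by
      intro c
      rw [mul_comm, pow_mul, (hprim.pow_eq_one_iff_dvd k).mpr hdk, one_pow]
    simp [h1]
  · simp only [hdk, if_false]
    have hne : (rou d)^k ≠ 1 := fun h => hdk ((hprim.pow_eq_one_iff_dvd k).mp h)
    have hgeom := geom_sum_mul ((rou d)^k) d
    rw [← pow_mul, mul_comm k d, pow_mul, hprim.pow_eq_one, one_pow, sub_self] at hgeom
    have := mul_eq_zero.mp hgeom
    rcases this with h | h
    · calc ∑ c ∈ Finset.range d, (rou d)^(c*k)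
          = ∑ c ∈ Finset.range d, ((rou d)^k)^c := by
            refine Finset.sum_congr rfl fun c _ => ?_
            rw [← pow_mul, mul_comm]
        _ = 0 := h
    · exact absurd (by rwa [sub_eq_zero] at h) hne

lemma swap_sum (d n : ℕ) (hd : d ≠ 0) (P : ℕ → ℂ) :
    ∑ c ∈ Finset.range d, ∑ a : Fin n → Fin (d-1),
        P (tupleSum d n a) * ((rou d)^c) ^ (tupleSum d n a)
      = d * ∑ a ∈ intTuples d n, P (tupleSum d n a) := by
  rw [Finset.sum_comm]
  have step : ∀ a : Fin n → Fin (d-1),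
      ∑ c ∈ Finset.range d, P (tupleSum d n a) * ((rou d)^c) ^ (tupleSum d n a)
        = P (tupleSum d n a) * (if d ∣ tupleSum d n a then (d:ℂ) else 0) := by
    intro a
    rw [← Finset.mul_sum]
    congr 1
    rw [← orth d hd (tupleSum d n a)]
    exact Finset.sum_congr rfl fun c _ => by rw [← pow_mul]
  rw [Finset.sum_congr rfl fun a _ => step a]
  rw [intTuples, Finset.sum_filter, Finset.mul_sum]
  refine Finset.sum_congr rfl fun a _ => ?_
  by_cases h : d ∣ tupleSum d n a <;> simp [h] <;> ring

def sig1 (d : ℕ) : ℕ := ∑ x : Fin (d-1), ((x:ℕ)+1)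
def sig2 (d : ℕ) : ℕ := ∑ x : Fin (d-1), ((x:ℕ)+1)^2
noncomputable def Sig3 (d : ℕ) : ℂ := ∑ x : Fin (d-1), ((x:ℕ)+1 : ℂ) * ((d:ℂ) - ((x:ℕ)+1))

lemma dN0 (d n : ℕ) (hd : d ≠ 0) :
    (d:ℂ) * (intTuples d n).card = ∑ c ∈ Finset.range d, SA d n ((rou d)^c) := by
  have h := swap_sum d n hd (fun _ => 1)
  simp only [one_mul] at h
  rw [show ((intTuples d n).card : ℂ) = ∑ a ∈ intTuples d n, (1:ℂ) by simp, ← h]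
  rfl

lemma dN1 (d n : ℕ) (hd : d ≠ 0) :
    (d:ℂ) * (∑ a ∈ intTuples d n, (tupleSum d n a : ℂ))
      = ∑ c ∈ Finset.range d, SB d n ((rou d)^c) := by
  have h := swap_sum d n hd (fun s => (s:ℂ))
  rw [← h]
  rfl

lemma dN2 (d n : ℕ) (hd : d ≠ 0) :
    (d:ℂ) * (∑ a ∈ intTuples d n, (tupleSum d n a : ℂ)^2)
      = ∑ c ∈ Finset.range d, SC d n ((rou d)^c) := by
  have h := swap_sum d n hd (fun s => (s:ℂ)^2)
  rw [← h]
  rfl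

lemma pf_one (d : ℕ) (hd : 1 ≤ d) : pf d 1 = (d:ℂ) - 1 := by
  simp [pf]
  rw [Nat.cast_sub hd]
  simp

lemma ph_one (d : ℕ) : ph d 1 = (sig1 d : ℂ) := by
  simp [ph, sig1]

lemma pq_one (d : ℕ) : pq d 1 = (sig2 d : ℂ) := by
  simp [pq, sig2]

lemma not_dvd_succ_val (d : ℕ) (x : Fin (d-1)) : ¬ d ∣ ((x:ℕ)+1) := by
  intro h
  have hx := x.isLt
  have := Nat.le_of_dvd (by omega) h
  omega

lemma pf_rou (d : ℕ) (hd : d ≠ 0) (c : ℕ) (hc : c ≠ 0) (hcd : c < d) :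
    pf d ((rou d)^c) = -1 := by
  have hprim := rou_prim d hd
  have hne : (rou d)^c ≠ 1 := by
    intro h
    have := (hprim.pow_eq_one_iff_dvd c).mp h
    have := Nat.le_of_dvd (by omega) this
    omega
  have hgeom : ∑ i ∈ Finset.range d, ((rou d)^c)^i = 0 := by
    have hgm := geom_sum_mul ((rou d)^c) d
    rw [← pow_mul, mul_comm c d, pow_mul, hprim.pow_eq_one, one_pow, sub_self] at hgm
    rcases mul_eq_zero.mp hgm with h | h
    · exact h
    · exact absurd (by rwa [sub_eq_zero] at h) hne
  have hsplit : Finset.range d = Finset.range ((d-1)+1) := by congr 1; omega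
  rw [hsplit, Finset.sum_range_succ'] at hgeom
  simp only [pow_zero] at hgeom
  have : pf d ((rou d)^c) = ∑ i ∈ Finset.range (d-1), ((rou d)^c)^(i+1) := by
    rw [pf]
    exact Fin.sum_univ_eq_sum_range (fun i => ((rou d)^c)^(i+1)) (d-1)
  rw [this]
  linear_combination hgeom

lemma sum_ph (d : ℕ) (hd : d ≠ 0) : ∑ c ∈ Finset.range d, ph d ((rou d)^c) = 0 := by
  unfold ph
  rw [Finset.sum_comm]
  refine Finset.sum_eq_zero fun x _ => ?_
  have : ∑ c ∈ Finset.range d, ((x:ℕ)+1 : ℂ) * ((rou d)^c)^((x:ℕ)+1)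
      = ((x:ℕ)+1 : ℂ) * ∑ c ∈ Finset.range d, (rou d)^(c*((x:ℕ)+1)) := by
    rw [Finset.mul_sum]
    exact Finset.sum_congr rfl fun c _ => by rw [← pow_mul]
  rw [this, orth d hd, if_neg (not_dvd_succ_val d x), mul_zero]

lemma sum_pq (d : ℕ) (hd : d ≠ 0) : ∑ c ∈ Finset.range d, pq d ((rou d)^c) = 0 := by
  unfold pq
  rw [Finset.sum_comm]
  refine Finset.sum_eq_zero fun x _ => ?_
  have : ∑ c ∈ Finset.range d, ((x:ℕ)+1 : ℂ)^2 * ((rou d)^c)^((x:ℕ)+1)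
      = ((x:ℕ)+1 : ℂ)^2 * ∑ c ∈ Finset.range d, (rou d)^(c*((x:ℕ)+1)) := by
    rw [Finset.mul_sum]
    exact Finset.sum_congr rfl fun c _ => by rw [← pow_mul]
  rw [this, orth d hd, if_neg (not_dvd_succ_val d x), mul_zero]

lemma sum_ph_sq (d : ℕ) (hd : 3 ≤ d) :
    ∑ c ∈ Finset.range d, (ph d ((rou d)^c))^2 = (d:ℂ) * Sig3 d := by
  have hd0 : d ≠ 0 := by omega
  have expand : ∀ c ∈ Finset.range d, (ph d ((rou d)^c))^2
      = ∑ x : Fin (d-1), ∑ y : Fin (d-1),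
          ((x:ℕ)+1 : ℂ) * ((y:ℕ)+1 : ℂ) * (rou d)^(c*(((x:ℕ)+1)+((y:ℕ)+1))) := by
    intro c _
    rw [ph, sq, Finset.sum_mul_sum]
    refine Finset.sum_congr rfl fun x _ => Finset.sum_congr rfl fun y _ => ?_
    rw [mul_mul_mul_comm, ← pow_add, ← pow_mul]
  rw [Finset.sum_congr rfl expand]
  rw [Finset.sum_comm]
  have inner : ∀ x : Fin (d-1),
      ∑ c ∈ Finset.range d, ∑ y : Fin (d-1),
          ((x:ℕ)+1 : ℂ) * ((y:ℕ)+1 : ℂ) * (rou d)^(c*(((x:ℕ)+1)+((y:ℕ)+1)))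
      = (d:ℂ) * (((x:ℕ)+1 : ℂ) * ((d:ℂ) - ((x:ℕ)+1))) := by
    intro x
    rw [Finset.sum_comm]
    have hx := x.isLt
    -- the unique y making the sum divisible
    have hyval : d - 2 - (x:ℕ) < d - 1 := by omega
    set y₀ : Fin (d-1) := ⟨d - 2 - (x:ℕ), hyval⟩ with hy₀
    rw [Finset.sum_eq_single y₀]
    · have : ∑ c ∈ Finset.range d,
          ((x:ℕ)+1 : ℂ) * ((y₀:ℕ)+1 : ℂ) * (rou d)^(c*(((x:ℕ)+1)+((y₀:ℕ)+1)))
          = ((x:ℕ)+1 : ℂ) * ((y₀:ℕ)+1 : ℂ) *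
              ∑ c ∈ Finset.range d, (rou d)^(c*(((x:ℕ)+1)+((y₀:ℕ)+1))) := by
        rw [Finset.mul_sum]
      rw [this, orth d hd0, if_pos]
      · have hval : ((y₀:ℕ) : ℂ) + 1 = (d:ℂ) - ((x:ℕ)+1) := by
          simp only [hy₀]
          have : ((d - 2 - (x:ℕ) : ℕ) : ℂ) = (d:ℂ) - 2 - (x:ℕ) := by
            push_cast [Nat.cast_sub (by omega : 2 + (x:ℕ) ≤ d)]
            rw [Nat.sub_sub]
            push_cast [Nat.cast_sub (by omega : 2 + (x:ℕ) ≤ d)]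
            ring
          rw [this]
          ring
        rw [hval]
        ring
      · simp only [hy₀]
        have : ((x:ℕ)+1) + ((d - 2 - (x:ℕ))+1) = d := by omega
        rw [this]
    · intro y _ hy
      have : ¬ d ∣ (((x:ℕ)+1)+((y:ℕ)+1)) := by
        intro hdvd
        have hy2 := y.isLt
        obtain ⟨k, hk⟩ := hdvd
        have hxy : (y:ℕ) = d - 2 - (x:ℕ) := by
          have hx2 := x.isLt
          have h1 : k ≠ 0 := by rintro rfl; omega
          have h2 : k < 2 := by
            by_contra h2
            have : d * 2 ≤ d * k := Nat.mul_le_mul_left d (by omega)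
            omega
          have hk1 : k = 1 := by omega
          rw [hk1, mul_one] at hk
          omega
        exact hy (Fin.ext hxy)
      have : ∑ c ∈ Finset.range d,
          ((x:ℕ)+1 : ℂ) * ((y:ℕ)+1 : ℂ) * (rou d)^(c*(((x:ℕ)+1)+((y:ℕ)+1)))
          = ((x:ℕ)+1 : ℂ) * ((y:ℕ)+1 : ℂ) *
              ∑ c ∈ Finset.range d, (rou d)^(c*(((x:ℕ)+1)+((y:ℕ)+1))) := by
        rw [Finset.mul_sum]
      rw [this, orth d hd0, if_neg ‹¬ d ∣ _›, mul_zero]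
    · intro h
      exact absurd (Finset.mem_univ y₀) h
  rw [Finset.sum_congr rfl fun x _ => inner x]
  rw [Sig3, Finset.mul_sum]

lemma gauss1 (m : ℕ) : 2 * ∑ i ∈ Finset.range m, (i+1) = m*(m+1) := by
  induction m with
  | zero => simp
  | succ m ih => rw [Finset.sum_range_succ, Nat.mul_add, ih]; ring

lemma gauss2 (m : ℕ) : 6 * ∑ i ∈ Finset.range m, (i+1)^2 = m*(m+1)*(2*m+1) := by
  induction m with
  | zero => simp
  | succ m ih => rw [Finset.sum_range_succ, Nat.mul_add, ih]; ring

lemma csig1 (d : ℕ) (hd : 1 ≤ d) : 2 * (sig1 d : ℂ) = ((d:ℂ) - 1) * d := by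
  have h : sig1 d = ∑ i ∈ Finset.range (d-1), (i+1) :=
    Fin.sum_univ_eq_sum_range (fun i => i+1) (d-1)
  have h2 := gauss1 (d-1)
  have h3 : (d-1) + 1 = d := by omega
  rw [h3] at h2
  have : (2 * sig1 d : ℕ) = ((d-1)*d : ℕ) := by rw [h, h2]
  calc 2 * (sig1 d : ℂ) = ((2 * sig1 d : ℕ) : ℂ) := by push_cast; ring
    _ = (((d-1)*d : ℕ) : ℂ) := by rw [this]
    _ = ((d:ℂ) - 1) * d := by push_cast [Nat.cast_sub hd]; ring

lemma csig2 (d : ℕ) (hd : 1 ≤ d) : 6 * (sig2 d : ℂ) = ((d:ℂ) - 1) * d * (2*d - 1) := by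
  have h : sig2 d = ∑ i ∈ Finset.range (d-1), (i+1)^2 :=
    Fin.sum_univ_eq_sum_range (fun i => (i+1)^2) (d-1)
  have h2 := gauss2 (d-1)
  have h3 : (d-1) + 1 = d := by omega
  rw [h3] at h2
  have h4 : 2*(d-1)+1 = 2*d - 1 := by omega
  rw [h4] at h2
  have : (6 * sig2 d : ℕ) = ((d-1)*d*(2*d-1) : ℕ) := by rw [h, h2]
  calc 6 * (sig2 d : ℂ) = ((6 * sig2 d : ℕ) : ℂ) := by push_cast; ring
    _ = (((d-1)*d*(2*d-1) : ℕ) : ℂ) := by rw [this]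
    _ = ((d:ℂ) - 1) * d * (2*d - 1) := by
        push_cast [Nat.cast_sub hd, Nat.cast_sub (by omega : 1 ≤ 2*d)]; ring

lemma csig3 (d : ℕ) (hd : 1 ≤ d) : 6 * Sig3 d = ((d:ℂ) - 1) * d * ((d:ℂ) + 1) := by
  have h : Sig3 d = (d:ℂ) * (sig1 d) - (sig2 d) := by
    rw [Sig3, sig1, sig2]
    push_cast
    rw [Finset.mul_sum, ← Finset.sum_sub_distrib]
    exact Finset.sum_congr rfl fun x _ => by ring
  rw [h]
  have h1 := csig1 d hd
  have h2 := csig2 d hd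
  linear_combination 3 * (d:ℂ) * h1 - h2

lemma split_c (d : ℕ) (hd : 1 ≤ d) (G : ℕ → ℂ) :
    ∑ c ∈ Finset.range d, G c = (∑ c ∈ Finset.range (d-1), G (c+1)) + G 0 := by
  rw [show Finset.range d = Finset.range ((d-1)+1) by congr 1; omega,
    Finset.sum_range_succ']

lemma cast_dm1 (d : ℕ) (hd : 1 ≤ d) : ((d - 1 : ℕ) : ℂ) = (d:ℂ) - 1 := by
  push_cast [Nat.cast_sub hd]; ring

lemma MAIN0 (d m : ℕ) (hd : 3 ≤ d) :
    (d:ℂ) * (intTuples d (m+2)).card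
      = ((d:ℂ)-1)^(m+2) + (-1)^m * ((d:ℂ)-1) := by
  have hd0 : d ≠ 0 := by omega
  rw [dN0 d (m+2) hd0]
  rw [split_c d (by omega) (fun c => SA d (m+2) ((rou d)^c))]
  have h0 : SA d (m+2) ((rou d)^0) = ((d:ℂ)-1)^(m+2) := by
    rw [pow_zero, SA_eq, pf_one d (by omega)]
  have hc : ∀ c ∈ Finset.range (d-1), SA d (m+2) ((rou d)^(c+1)) = (-1:ℂ)^(m+2) := by
    intro c hc
    rw [Finset.mem_range] at hc
    rw [SA_eq, pf_rou d hd0 (c+1) (by omega) (by omega)]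
  rw [Finset.sum_congr rfl hc, h0, Finset.sum_const, Finset.card_range, nsmul_eq_mul,
    cast_dm1 d (by omega)]
  ring_nf
  try rw [pow_succ, pow_succ]
  try ring

lemma MAIN1 (d m : ℕ) (hd : 3 ≤ d) :
    (d:ℂ) * (∑ a ∈ intTuples d (m+2), (tupleSum d (m+2) a : ℂ))
      = (m+2 : ℂ) * (sig1 d) * (((d:ℂ)-1)^(m+1) + (-1)^m) := by
  have hd0 : d ≠ 0 := by omega
  rw [dN1 d (m+2) hd0]
  rw [split_c d (by omega) (fun c => SB d (m+2) ((rou d)^c))]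
  have h0 : SB d (m+2) ((rou d)^0) = (m+2 : ℂ) * (sig1 d) * ((d:ℂ)-1)^(m+1) := by
    rw [pow_zero, show m+2 = (m+1)+1 from rfl, SB_eq, ph_one, pf_one d (by omega)]
    all_goals (push_cast; try ring)
  have hc : ∀ c ∈ Finset.range (d-1), SB d (m+2) ((rou d)^(c+1))
      = (m+2 : ℂ) * ph d ((rou d)^(c+1)) * (-1:ℂ)^(m+1) := by
    intro c hc
    rw [Finset.mem_range] at hc
    rw [show m+2 = (m+1)+1 from rfl, SB_eq, pf_rou d hd0 (c+1) (by omega) (by omega)]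
    all_goals (push_cast; try ring)
  rw [Finset.sum_congr rfl hc, h0]
  have hsum : ∑ c ∈ Finset.range (d-1), ph d ((rou d)^(c+1)) = -(sig1 d : ℂ) := by
    have := sum_ph d hd0
    rw [split_c d (by omega) (fun c => ph d ((rou d)^c))] at this
    rw [pow_zero, ph_one] at this
    linear_combination this
  have : ∑ c ∈ Finset.range (d-1), (m+2 : ℂ) * ph d ((rou d)^(c+1)) * (-1:ℂ)^(m+1)
      = (m+2 : ℂ) * (-(sig1 d : ℂ)) * (-1:ℂ)^(m+1) := by
    rw [← Finset.sum_mul, ← Finset.mul_sum, hsum]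
  rw [this]
  ring_nf
  try rw [pow_succ]
  try ring

lemma MAIN2 (d m : ℕ) (hd : 3 ≤ d) :
    (d:ℂ) * (∑ a ∈ intTuples d (m+2), (tupleSum d (m+2) a : ℂ)^2)
      = (m+2 : ℂ) * (sig2 d) * (((d:ℂ)-1)^(m+1) + (-1)^m)
        + (m+2 : ℂ) * (m+1 : ℂ) * ((sig1 d : ℂ)^2 * ((d:ℂ)-1)^m
            + (-1)^m * ((d:ℂ) * Sig3 d - (sig1 d : ℂ)^2)) := by
  have hd0 : d ≠ 0 := by omega
  rw [dN2 d (m+2) hd0]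
  rw [split_c d (by omega) (fun c => SC d (m+2) ((rou d)^c))]
  have h0 : SC d (m+2) ((rou d)^0)
      = (m+2 : ℂ) * (sig2 d) * ((d:ℂ)-1)^(m+1)
        + (m+2 : ℂ) * (m+1 : ℂ) * (sig1 d : ℂ)^2 * ((d:ℂ)-1)^m := by
    rw [pow_zero, SC_eq, ph_one, pq_one, pf_one d (by omega)]
    all_goals (push_cast; try ring)
  have hc : ∀ c ∈ Finset.range (d-1), SC d (m+2) ((rou d)^(c+1))
      = (m+2 : ℂ) * pq d ((rou d)^(c+1)) * (-1:ℂ)^(m+1)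
        + (m+2 : ℂ) * (m+1 : ℂ) * (ph d ((rou d)^(c+1)))^2 * (-1:ℂ)^m := by
    intro c hc
    rw [Finset.mem_range] at hc
    rw [SC_eq, pf_rou d hd0 (c+1) (by omega) (by omega)]
    all_goals (push_cast; try ring)
  rw [Finset.sum_congr rfl hc, h0]
  have hsumq : ∑ c ∈ Finset.range (d-1), pq d ((rou d)^(c+1)) = -(sig2 d : ℂ) := by
    have := sum_pq d hd0
    rw [split_c d (by omega) (fun c => pq d ((rou d)^c))] at this
    rw [pow_zero, pq_one] at this
    linear_combination this
  have hsumh2 : ∑ c ∈ Finset.range (d-1), (ph d ((rou d)^(c+1)))^2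
      = (d:ℂ) * Sig3 d - (sig1 d : ℂ)^2 := by
    have := sum_ph_sq d hd
    rw [split_c d (by omega) (fun c => (ph d ((rou d)^c))^2)] at this
    rw [pow_zero, ph_one] at this
    linear_combination this
  rw [Finset.sum_add_distrib]
  have e1 : ∑ c ∈ Finset.range (d-1), (m+2 : ℂ) * pq d ((rou d)^(c+1)) * (-1:ℂ)^(m+1)
      = (m+2 : ℂ) * (-(sig2 d : ℂ)) * (-1:ℂ)^(m+1) := by
    rw [← Finset.sum_mul, ← Finset.mul_sum, hsumq]
  have e2 : ∑ c ∈ Finset.range (d-1),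
        (m+2 : ℂ) * (m+1 : ℂ) * (ph d ((rou d)^(c+1)))^2 * (-1:ℂ)^m
      = (m+2 : ℂ) * (m+1 : ℂ) * ((d:ℂ) * Sig3 d - (sig1 d : ℂ)^2) * (-1:ℂ)^m := by
    rw [← Finset.sum_mul, ← Finset.mul_sum, hsumh2]
  rw [e1, e2]
  ring_nf
  try rw [pow_succ]
  try ring

lemma sum_sq_pair {κ : Type*} (s : Finset κ) (g : κ → ℝ) (hg : ∑ a ∈ s, g a = 0) :
    ∑ a ∈ s, ∑ b ∈ s, (g a + g b)^2 = 2 * s.card * ∑ a ∈ s, (g a)^2 := by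
  have inner : ∀ a : κ, ∑ b ∈ s, (g a + g b)^2
      = s.card * (g a)^2 + 2 * (g a) * (∑ b ∈ s, g b) + ∑ b ∈ s, (g b)^2 := by
    intro a
    calc ∑ b ∈ s, (g a + g b)^2
        = ∑ b ∈ s, ((g a)^2 + (2 * (g a) * g b + (g b)^2)) :=
          Finset.sum_congr rfl fun b _ => by ring
      _ = s.card • (g a)^2 + (∑ b ∈ s, 2 * (g a) * g b + ∑ b ∈ s, (g b)^2) := by
          rw [Finset.sum_add_distrib, Finset.sum_const, Finset.sum_add_distrib]
      _ = s.card * (g a)^2 + 2 * (g a) * (∑ b ∈ s, g b) + ∑ b ∈ s, (g b)^2 := by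
          rw [← Finset.mul_sum, nsmul_eq_mul]
          ring
  rw [Finset.sum_congr rfl fun a _ => inner a, hg]
  rw [Finset.sum_add_distrib, Finset.sum_add_distrib, Finset.sum_const]
  simp only [mul_zero, zero_mul, add_zero, nsmul_eq_mul, Finset.sum_const_zero]
  rw [← Finset.mul_sum]
  ring

lemma hsig1C (d : ℕ) (hd : 3 ≤ d) : (sig1 d : ℂ) = ((d:ℂ)-1)*d/2 := by
  linear_combination (csig1 d (by omega))/2

lemma hsig2C (d : ℕ) (hd : 3 ≤ d) : (sig2 d : ℂ) = ((d:ℂ)-1)*d*(2*d-1)/6 := by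
  linear_combination (csig2 d (by omega))/6

lemma hsig3C (d : ℕ) (hd : 3 ≤ d) : Sig3 d = ((d:ℂ)-1)*d*((d:ℂ)+1)/6 := by
  linear_combination (csig3 d (by omega))/6

lemma R0 (d m : ℕ) (hd : 3 ≤ d) :
    (d:ℝ) * ((intTuples d (m+2)).card : ℝ)
      = ((d:ℝ)-1)^(m+2) + (-1)^m * ((d:ℝ)-1) := by
  apply Complex.ofReal_injective
  push_cast
  linear_combination MAIN0 d m hd

lemma R1 (d m : ℕ) (hd : 3 ≤ d) :
    2 * ((∑ a ∈ intTuples d (m+2), tupleSum d (m+2) a : ℕ) : ℝ)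
      = (m+2 : ℝ) * d * ((intTuples d (m+2)).card : ℝ) := by
  have h1 := MAIN1 d m hd
  rw [hsig1C d hd] at h1
  have h0 := MAIN0 d m hd
  apply Complex.ofReal_injective
  push_cast
  have hd0 : (d:ℂ) ≠ 0 := by
    simp only [ne_eq, Nat.cast_eq_zero]; omega
  have key : 2 * ((d:ℂ) * (∑ a ∈ intTuples d (m+2), (tupleSum d (m+2) a : ℂ)))
      = (m+2 : ℂ) * d * ((d:ℂ) * ((intTuples d (m+2)).card : ℂ)) := by
    rw [h1, h0]
    ring
  have := mul_left_cancel₀ hd0 (by linear_combination key : (d:ℂ) * (2 * ∑ a ∈ intTuples d (m+2), (tupleSum d (m+2) a : ℂ)) = (d:ℂ) * ((m+2 : ℂ) * d * ((intTuples d (m+2)).card : ℂ)))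
  linear_combination this

lemma R2 (d m : ℕ) (hd : 3 ≤ d) :
    12 * ((∑ a ∈ intTuples d (m+2), (tupleSum d (m+2) a)^2 : ℕ) : ℝ)
      = (3*(m+2:ℝ)^2*(d:ℝ)^2 + (m+2:ℝ)*d*((d:ℝ)-2)) * ((intTuples d (m+2)).card : ℝ)
        - (-1)^m * (m+2:ℝ) * (m+1:ℝ) * (d:ℝ) * ((d:ℝ)-1) * ((d:ℝ)-2) := by
  have h2 := MAIN2 d m hd
  rw [hsig1C d hd, hsig2C d hd, hsig3C d hd] at h2
  have h0 := MAIN0 d m hd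
  apply Complex.ofReal_injective
  push_cast
  have hd0 : (d:ℂ) ≠ 0 := by
    simp only [ne_eq, Nat.cast_eq_zero]; omega
  have key : (d:ℂ) * (12 * (∑ a ∈ intTuples d (m+2), (tupleSum d (m+2) a : ℂ)^2))
      = (d:ℂ) * ((3*(m+2:ℂ)^2*(d:ℂ)^2 + (m+2:ℂ)*d*((d:ℂ)-2)) * ((intTuples d (m+2)).card : ℂ)
        - (-1)^m * (m+2:ℂ) * (m+1:ℂ) * (d:ℂ) * ((d:ℂ)-1) * ((d:ℂ)-2)) := by
    linear_combination 12 * h2 - (3*(m+2:ℂ)^2*(d:ℂ)^2 + (m+2:ℂ)*(d:ℂ)*((d:ℂ)-2)) * h0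
  have := mul_left_cancel₀ hd0 key
  linear_combination this

/-- For `d ≥ n ≥ 500000`, the variance of `Z'_d(n)` satisfies
`Var(Z'_d(n)) ≥ n(d−3)/(6d) − √(3n)`. -/
theorem stmt_14 (d n : ℕ) (hnd : n ≤ d) (hn : 500000 ≤ n) :
    (∑ a ∈ intTuples d n, ∑ b ∈ intTuples d n, (Z' d n a b - Z'mean d n) ^ 2)
        / ((intTuples d n).card : ℝ) ^ 2
    ≥ (n : ℝ) * ((d : ℝ) - 3) / (6 * d) - Real.sqrt (3 * n) := by
  obtain ⟨m, rfl⟩ : ∃ m, n = m + 2 := ⟨n - 2, by omega⟩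
  have hd3 : 3 ≤ d := by omega
  have hm : 499998 ≤ m := by omega
  have hdR : (3:ℝ) ≤ (d:ℝ) := by exact_mod_cast hd3
  have hd0 : (0:ℝ) < (d:ℝ) := by linarith
  set E : ℝ := (d:ℝ) - 1 with hE
  have hE2 : (2:ℝ) ≤ E := by rw [hE]; linarith
  have hE1 : (1:ℝ) ≤ E := by linarith
  set NC : ℝ := ((intTuples d (m+2)).card : ℝ) with hNC
  have r0 := R0 d m hd3
  have r1 := R1 d m hd3
  have r2 := R2 d m hd3
  push_cast at r1 r2
  rw [← hNC] at r0 r1 r2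
  set u : ℝ := (-1:ℝ)^m with hu'
  set S1 : ℝ := ∑ a ∈ intTuples d (m+2), (tupleSum d (m+2) a : ℝ) with hS1
  set S2 : ℝ := ∑ a ∈ intTuples d (m+2), (tupleSum d (m+2) a : ℝ)^2 with hS2
  have hu : u = 1 ∨ u = -1 := neg_one_pow_eq_or ℝ m
  have hdN : 0 < (d:ℝ) * NC := by
    have hp1 : E^2 ≤ E^(m+2) := pow_le_pow_right₀ hE1 (by omega)
    have hp0 : (0:ℝ) < E^(m+2) := by positivity
    have h2E : 2 * E ≤ E^2 := by
      have := mul_le_mul_of_nonneg_right hE2 (by linarith : (0:ℝ) ≤ E)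
      calc 2 * E ≤ E * E := this
        _ = E^2 := by ring
    rcases hu with h | h <;> rw [r0, h]
    · linarith
    · linarith
  have hN0 : 0 < NC := by
    have hge : 0 ≤ NC := by rw [hNC]; positivity
    rcases eq_or_lt_of_le hge with h0 | h0
    · exfalso
      rw [← h0, mul_zero] at hdN
      exact lt_irrefl _ hdN
    · exact h0
  have hN0' : NC ≠ 0 := ne_of_gt hN0
  have hd0' : (d:ℝ) ≠ 0 := ne_of_gt hd0
  have hS1val : S1 = (m+2:ℝ) * d * NC / 2 := by linarith
  have hS2val : S2 = ((3*(m+2:ℝ)^2*(d:ℝ)^2 + (m+2:ℝ)*d*((d:ℝ)-2)) * NC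
      - u * (m+2:ℝ) * (m+1:ℝ) * (d:ℝ) * ((d:ℝ)-1) * ((d:ℝ)-2))/12 := by linarith
  -- the mean
  have hmean : Z'mean d (m+2) = (m+2 : ℝ) := by
    have hsum : ∑ a ∈ intTuples d (m+2), ∑ b ∈ intTuples d (m+2), Z' d (m+2) a b
        = 2 * NC * S1 / d := by
      unfold Z'
      have inner : ∀ a, ∑ b ∈ intTuples d (m+2),
          ((tupleSum d (m+2) a : ℝ) + (tupleSum d (m+2) b : ℝ)) / d
          = (NC * (tupleSum d (m+2) a : ℝ) + S1) / d := by
        intro a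
        rw [← Finset.sum_div, Finset.sum_add_distrib, Finset.sum_const, nsmul_eq_mul]
      rw [Finset.sum_congr rfl fun a _ => inner a, ← Finset.sum_div,
        Finset.sum_add_distrib, Finset.sum_const, ← Finset.mul_sum, ← hS1, nsmul_eq_mul,
        ← hNC]
      ring
    unfold Z'mean
    rw [hsum, ← hNC, hS1val]
    field_simp
  -- center
  set g : (Fin (m+2) → Fin (d-1)) → ℝ :=
    fun a => (tupleSum d (m+2) a : ℝ)/d - (m+2:ℝ)/2 with hg
  have hgsum : ∑ a ∈ intTuples d (m+2), g a = 0 := by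
    rw [hg]
    rw [Finset.sum_sub_distrib, ← Finset.sum_div, ← hS1, Finset.sum_const, nsmul_eq_mul,
      ← hNC, hS1val]
    field_simp
    ring
  have hsq : ∑ a ∈ intTuples d (m+2), ∑ b ∈ intTuples d (m+2),
      (Z' d (m+2) a b - Z'mean d (m+2))^2 = 2 * NC * ∑ a ∈ intTuples d (m+2), (g a)^2 := by
    have key : ∀ a b, (Z' d (m+2) a b - Z'mean d (m+2))^2 = (g a + g b)^2 := by
      intro a b
      rw [hmean, hg]
      unfold Z'
      field_simp
      ring
    rw [Finset.sum_congr rfl fun a _ => Finset.sum_congr rfl fun b _ => key a b]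
    rw [sum_sq_pair _ g hgsum, ← hNC]
  have hgsq : ∑ a ∈ intTuples d (m+2), (g a)^2
      = S2/(d:ℝ)^2 - (m+2:ℝ)^2 * NC / 4 := by
    rw [hg]
    have expand : ∀ a : Fin (m+2) → Fin (d-1), ((tupleSum d (m+2) a : ℝ)/d - (m+2:ℝ)/2)^2
        = (tupleSum d (m+2) a : ℝ)^2/(d:ℝ)^2
          - ((m+2:ℝ)/d) * (tupleSum d (m+2) a : ℝ) + (m+2:ℝ)^2/4 := by
      intro a
      field_simp
      ring
    rw [Finset.sum_congr rfl fun a _ => expand a, Finset.sum_add_distrib,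
      Finset.sum_sub_distrib, ← Finset.sum_div, ← Finset.mul_sum, ← hS1, ← hS2,
      Finset.sum_const, nsmul_eq_mul, ← hNC, hS1val]
    field_simp
    ring
  -- final formula
  set C : ℝ := (m+2:ℝ) * (m+1:ℝ) * ((d:ℝ)-1) * ((d:ℝ)-2) with hC
  have hmain : (∑ a ∈ intTuples d (m+2), ∑ b ∈ intTuples d (m+2),
      (Z' d (m+2) a b - Z'mean d (m+2))^2) / NC^2
      = (m+2:ℝ) * ((d:ℝ)-2) / (6*d) - u * C / (6 * (d:ℝ) * NC) := by
    rw [hsq, hgsq, hS2val]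
    field_simp
    ring
  rw [hmain]
  -- the inequality
  push_cast
  have hsqrt1 : (1:ℝ) ≤ Real.sqrt (3 * ((m:ℝ)+2)) := by
    rw [show (1:ℝ) = Real.sqrt 1 by simp]
    apply Real.sqrt_le_sqrt
    linarith [hm]
  have hsqrt1' : (1:ℝ) ≤ Real.sqrt (3 * ((m:ℝ)+2)) := hsqrt1
  have hmd : (m:ℝ) + 2 ≤ (d:ℝ) := by exact_mod_cast hnd
  have hdE2 : (d:ℝ) ≤ E^2 := by
    have h1 : 0 ≤ (d:ℝ) * ((d:ℝ)-3) := mul_nonneg (by linarith) (by linarith)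
    have h2 : E^2 = (d:ℝ)*((d:ℝ)-3) + (d:ℝ) + 1 := by rw [hE]; ring
    linarith
  have hCE : C ≤ E^2 * E^2 * E * E := by
    rw [hC]
    have h1 : (m:ℝ)+2 ≤ E^2 := by linarith
    have h2 : (m:ℝ)+1 ≤ E^2 := by linarith
    have h3 : (d:ℝ)-1 ≤ E := le_of_eq (by rw [hE])
    have h4 : (d:ℝ)-2 ≤ E := by rw [hE]; linarith
    have p1 : (0:ℝ) ≤ (m:ℝ)+1 := by positivity
    have p2 : (0:ℝ) ≤ (d:ℝ)-1 := by linarith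
    have p3 : (0:ℝ) ≤ (d:ℝ)-2 := by linarith
    have p4 : (0:ℝ) ≤ E := by linarith
    gcongr
  have hE6 : E^2 * E^2 * E * E ≤ E^(m+2) := by
    rw [show E^2 * E^2 * E * E = E^6 by ring]
    exact pow_le_pow_right₀ hE1 (by omega)
  have hCpos : 0 ≤ C := by
    rw [hC]
    have h2 : (2:ℝ) ≤ (d:ℝ) := by linarith
    have p1 : (0:ℝ) ≤ (d:ℝ)-1 := by linarith
    have p2 : (0:ℝ) ≤ (d:ℝ)-2 := by linarith
    positivity
  have key : u * C / (6 * (d:ℝ) * NC) ≤ 1 := by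
    rcases hu with h | h
    · rw [h, one_mul]
      rw [div_le_one (by linarith : (0:ℝ) < 6 * (d:ℝ) * NC)]
      have hEn : E^(m+2) ≤ (d:ℝ)*NC := by
        rw [r0, h]
        linarith
      linarith
    · rw [h]
      have : -C / (6 * (d:ℝ) * NC) ≤ 0 := by
        apply div_nonpos_of_nonpos_of_nonneg
        · linarith
        · linarith
      calc (-1) * C / (6 * (d:ℝ) * NC) = -C / (6 * (d:ℝ) * NC) := by ring_nf
        _ ≤ 0 := this
        _ ≤ 1 := by norm_num
  have hdiff : ((m:ℝ)+2)*((d:ℝ)-3)/(6*(d:ℝ)) ≤ ((m:ℝ)+2)*((d:ℝ)-2)/(6*(d:ℝ)) := by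
    have hnum : ((m:ℝ)+2)*((d:ℝ)-3) ≤ ((m:ℝ)+2)*((d:ℝ)-2) :=
      mul_le_mul_of_nonneg_left (by linarith) (by positivity)
    exact (div_le_div_iff_of_pos_right (by linarith)).mpr hnum
  linarith
end

section
/- For d ≥ n ≥ 500000, the variance of Z'_d(n) satisfies Var(Z'_d(n)) ≤ n/5.1. -/
open Finset Complex

/- ## Auxiliary lemmas -/

lemma tuple_prod_sum {n m : ℕ} (f : Fin n → Fin m → ℂ) :
    ∑ a : Fin n → Fin m, ∏ k, f k (a k) = ∏ k, ∑ v, f k v := by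
  rw [Finset.prod_univ_sum (fun _ => (univ : Finset (Fin m))) f]
  rw [Fintype.piFinset_univ]

lemma key_factor {m : ℕ} (n : ℕ) (hn : 1 ≤ n) (φ y : Fin m → ℂ) :
    ∑ a : Fin n → Fin m, ((∏ k, φ (a k)) * ((∑ i, y (a i)) * (∑ i, y (a i))))
    = (n : ℂ) * ((∑ v, φ v * (y v * y v)) * (∑ v, φ v) ^ (n - 1)
        + ((n : ℂ) - 1) * (∑ v, φ v * y v) ^ 2 * (∑ v, φ v) ^ (n - 2)) := by
  set A := ∑ v, φ v with hA
  set B := ∑ v, φ v * y v with hB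
  set C := ∑ v, φ v * (y v * y v) with hC
  have step1 : ∀ a : Fin n → Fin m,
      (∏ k, φ (a k)) * ((∑ i, y (a i)) * (∑ i, y (a i)))
      = ∑ i : Fin n, ∑ i' : Fin n, (∏ k, φ (a k)) * (y (a i) * y (a i')) := by
    intro a
    rw [Finset.sum_mul_sum]
    rw [Finset.mul_sum]
    exact Finset.sum_congr rfl fun i _ => Finset.mul_sum _ _ _
  calc ∑ a : Fin n → Fin m, ((∏ k, φ (a k)) * ((∑ i, y (a i)) * (∑ i, y (a i))))
      = ∑ a : Fin n → Fin m, ∑ i : Fin n, ∑ i' : Fin n, (∏ k, φ (a k)) * (y (a i) * y (a i')) := by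
        exact Finset.sum_congr rfl fun a _ => step1 a
    _ = ∑ i : Fin n, ∑ i' : Fin n, ∑ a : Fin n → Fin m, (∏ k, φ (a k)) * (y (a i) * y (a i')) := by
        rw [Finset.sum_comm]
        refine Finset.sum_congr rfl fun i _ => Finset.sum_comm
    _ = ∑ i : Fin n, ∑ i' : Fin n, (if i = i' then C * A ^ (n-1) else B ^ 2 * A ^ (n-2)) := by
        refine Finset.sum_congr rfl fun i _ => Finset.sum_congr rfl fun i' _ => ?_
        have hrw : ∀ a : Fin n → Fin m,
            (∏ k, φ (a k)) * (y (a i) * y (a i'))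
            = ∏ k, (φ (a k) * (if i = k then y (a k) else 1) * (if i' = k then y (a k) else 1)) := by
          intro a
          rw [Finset.prod_mul_distrib, Finset.prod_mul_distrib,
            Finset.prod_ite_eq univ i (fun k => y (a k)),
            Finset.prod_ite_eq univ i' (fun k => y (a k))]
          simp [mul_assoc]
        rw [Finset.sum_congr rfl fun a _ => hrw a]
        rw [tuple_prod_sum (fun k v => φ v * (if i = k then y v else 1) * (if i' = k then y v else 1))]
        by_cases h : i = i'
        · subst h
          simp only [if_pos rfl]
          have hval : ∀ k : Fin n, (∑ v, φ v * (if i = k then y v else 1) * (if i = k then y v else 1))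
              = if i = k then C else A := by
            intro k
            by_cases hk : i = k <;> simp [hk, hC, hA, mul_assoc]
          rw [Finset.prod_congr rfl fun k _ => hval k]
          rw [← Finset.mul_prod_erase univ _ (mem_univ i), if_pos rfl]
          have : ∀ k ∈ univ.erase i, (if i = k then C else A) = A := by
            intro k hk
            rw [if_neg (Ne.symm (Finset.ne_of_mem_erase hk))]
          rw [Finset.prod_congr rfl this, Finset.prod_const,
            Finset.card_erase_of_mem (mem_univ i), card_univ, Fintype.card_fin]
          simp
        · rw [if_neg h]
          have hval : ∀ k : Fin n, (∑ v, φ v * (if i = k then y v else 1) * (if i' = k then y v else 1))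
              = if i = k then B else (if i' = k then B else A) := by
            intro k
            by_cases hk : i = k
            · have : ¬ (i' = k) := fun hc => h (hk.trans hc.symm)
              simp [hk, this, hB]
            · by_cases hk' : i' = k <;> simp [hk, hk', hB, hA]
          rw [Finset.prod_congr rfl fun k _ => hval k]
          rw [← Finset.mul_prod_erase univ _ (mem_univ i), if_pos rfl]
          have hi'mem : i' ∈ univ.erase i := Finset.mem_erase.2 ⟨fun hc => h hc.symm, mem_univ i'⟩
          rw [← Finset.mul_prod_erase _ _ hi'mem, if_neg h, if_pos rfl]
          have : ∀ k ∈ (univ.erase i).erase i', (if i = k then B else if i' = k then B else A) = A := by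
            intro k hk
            have hk1 : k ≠ i' := Finset.ne_of_mem_erase hk
            have hki : k ≠ i := Finset.ne_of_mem_erase (Finset.mem_of_mem_erase hk)
            rw [if_neg (Ne.symm hki), if_neg (Ne.symm hk1)]
          rw [Finset.prod_congr rfl this, Finset.prod_const,
            Finset.card_erase_of_mem hi'mem,
            Finset.card_erase_of_mem (mem_univ i), card_univ, Fintype.card_fin,
            Nat.sub_sub]
          norm_num
          ring
    _ = (n : ℂ) * (C * A ^ (n-1) + ((n : ℂ) - 1) * B ^ 2 * A ^ (n-2)) := by
        have inner : ∀ i : Fin n,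
            ∑ i' : Fin n, (if i = i' then C * A ^ (n-1) else B ^ 2 * A ^ (n-2))
            = C * A ^ (n-1) + ((n : ℂ) - 1) * (B ^ 2 * A ^ (n-2)) := by
          intro i
          have : ∀ i' : Fin n, (if i = i' then C * A ^ (n-1) else B ^ 2 * A ^ (n-2))
              = B ^ 2 * A ^ (n-2) + (if i = i' then C * A ^ (n-1) - B ^ 2 * A ^ (n-2) else 0) := by
            intro i'; by_cases h : i = i' <;> simp [h]
          rw [Finset.sum_congr rfl fun i' _ => this i', Finset.sum_add_distrib,
            Finset.sum_const, Finset.sum_ite_eq univ i, if_pos (mem_univ i),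
            card_univ, Fintype.card_fin]
          have : ((n : ℂ) - 1) = ((n - 1 : ℕ) : ℂ) := by
            push_cast [Nat.cast_sub hn]; ring
          rw [nsmul_eq_mul]
          ring
        rw [Finset.sum_congr rfl fun i _ => inner i, Finset.sum_const, card_univ, Fintype.card_fin,
          nsmul_eq_mul]
        ring

noncomputable def zeta (d : ℕ) : ℂ := Complex.exp (2 * Real.pi * Complex.I / d)

lemma zeta_pow_d (d : ℕ) (hd : d ≠ 0) : zeta d ^ d = 1 :=
  (Complex.isPrimitiveRoot_exp d hd).pow_eq_one

lemma abs_zeta (d : ℕ) : ‖zeta d‖ = 1 := by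
  rw [zeta, show (2 * (Real.pi:ℂ) * Complex.I / d) = ((2 * Real.pi / d : ℝ) : ℂ) * Complex.I by
    push_cast; ring, Complex.norm_exp_ofReal_mul_I]

lemma root_sum (d : ℕ) (hd : d ≠ 0) (s : ℕ) :
    ∑ j ∈ range d, (zeta d ^ s) ^ j = if d ∣ s then (d : ℂ) else 0 := by
  by_cases h : d ∣ s
  · have h1 : zeta d ^ s = 1 := ((Complex.isPrimitiveRoot_exp d hd).pow_eq_one_iff_dvd s).2 h
    rw [if_pos h, h1]
    simp
  · rw [if_neg h, geom_sum_eq]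
    · rw [← pow_mul, mul_comm s d, pow_mul, zeta_pow_d d hd, one_pow]
      simp
    · exact fun hc => h (((Complex.isPrimitiveRoot_exp d hd).pow_eq_one_iff_dvd s).1 hc)

lemma geom_minus_one {d : ℕ} {z : ℂ} (hzd : z ^ d = 1) (hz : z ≠ 1) (hd : d ≠ 0) :
    ∑ v : Fin (d - 1), z ^ ((v : ℕ) + 1) = -1 := by
  have h0 : ∑ x ∈ range d, z ^ x = 0 := by
    rw [geom_sum_eq hz, hzd]; simp
  have hd1 : d = (d - 1) + 1 := (Nat.succ_pred_eq_of_pos (Nat.pos_of_ne_zero hd)).symm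
  rw [hd1, Finset.sum_range_succ'] at h0
  rw [Fin.sum_univ_eq_sum_range (fun x => z ^ (x + 1))]
  simp only [pow_zero] at h0
  linear_combination h0

lemma sr1 (m : ℕ) : ∑ x ∈ range m, (x : ℝ) = m * (m - 1) / 2 := by
  induction m with
  | zero => simp
  | succ k ih => rw [Finset.sum_range_succ, ih]; push_cast; ring

lemma sr2 (m : ℕ) : ∑ x ∈ range m, (x : ℝ) ^ 2 = m * (m - 1) * (2 * m - 1) / 6 := by
  induction m with
  | zero => simp
  | succ k ih => rw [Finset.sum_range_succ, ih]; push_cast; ring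

lemma yB (m : ℕ) : ∑ x ∈ range m, ((x : ℝ) + 1 - (m + 1) / 2) = 0 := by
  have h1 := sr1 m
  have : ∀ x ∈ range m, ((x : ℝ) + 1 - (m + 1) / 2) = (x : ℝ) + (1 - (m + 1) / 2) := by
    intro x _; ring
  rw [Finset.sum_congr rfl this, Finset.sum_add_distrib, Finset.sum_const, h1,
    Finset.card_range, nsmul_eq_mul]
  ring

lemma yC (m : ℕ) : ∑ x ∈ range m, ((x : ℝ) + 1 - (m + 1) / 2) ^ 2
    = ((m : ℝ) + 1) * (m : ℝ) * ((m : ℝ) - 1) / 12 := by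
  have h1 := sr1 m
  have h2 := sr2 m
  have : ∀ x ∈ range m, ((x : ℝ) + 1 - (m + 1) / 2) ^ 2
      = (x : ℝ) ^ 2 + (2 - ((m : ℝ) + 1)) * (x : ℝ) + (1 - ((m : ℝ) + 1) / 2) ^ 2 := by
    intro x _; ring
  rw [Finset.sum_congr rfl this, Finset.sum_add_distrib, Finset.sum_add_distrib,
    h2, ← Finset.mul_sum, h1, Finset.sum_const, Finset.card_range, nsmul_eq_mul]
  ring

/-- mean minimizes the sum of squared deviations -/
lemma mean_min {α : Type*} (P : Finset α) (f : α → ℝ) (c : ℝ) :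
    ∑ p ∈ P, (f p - (∑ q ∈ P, f q) / (P.card : ℝ)) ^ 2 ≤ ∑ p ∈ P, (f p - c) ^ 2 := by
  rcases P.eq_empty_or_nonempty with h | h
  · simp [h]
  · have hN : 0 < ((P.card : ℝ)) := by exact_mod_cast Finset.card_pos.2 h
    have expand : ∀ t : ℝ, ∑ p ∈ P, (f p - t) ^ 2
        = ∑ p ∈ P, (f p) ^ 2 - 2 * t * (∑ q ∈ P, f q) + (P.card : ℝ) * t ^ 2 := by
      intro t
      have h1 : ∀ p ∈ P, (f p - t) ^ 2 = ((f p) ^ 2 - 2 * t * (f p)) + t ^ 2 := fun p _ => by ring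
      rw [Finset.sum_congr rfl h1, Finset.sum_add_distrib, Finset.sum_sub_distrib,
        ← Finset.mul_sum, Finset.sum_const, nsmul_eq_mul]
    rw [expand, expand]
    set N := ((P.card : ℝ)) with hNdef
    set S := ∑ q ∈ P, f q with hS
    set u := S / N with hu0
    have hu : u * N = S := div_mul_cancel₀ S hN.ne'
    have h4 : 2 * c * S = 2 * c * u * N := by rw [← hu]; ring
    have h5 : 2 * u * S = 2 * u * u * N := by rw [← hu]; ring
    nlinarith [sq_nonneg (u - c), hN, h4, h5, mul_nonneg hN.le (sq_nonneg (u - c))]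

/- ## Fourier setup -/

noncomputable def phiF (d j : ℕ) : Fin (d - 1) → ℂ := fun v => (zeta d ^ j) ^ ((v : ℕ) + 1)

noncomputable def yF (d : ℕ) : Fin (d - 1) → ℂ := fun v => ((v : ℕ) : ℂ) + 1 - (d : ℂ) / 2

noncomputable def WF (d n j : ℕ) : ℂ :=
  ∑ a : Fin n → Fin (d - 1),
    ((∏ k, phiF d j (a k)) * ((∑ i, yF d (a i)) * (∑ i, yF d (a i))))

lemma gc_eq (d n : ℕ) (a : Fin n → Fin (d - 1)) :
    ((tupleSum d n a : ℂ) - n * d / 2) = ∑ i, yF d (a i) := by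
  rw [tupleSum]
  push_cast
  rw [show ∑ i, yF d (a i) = ∑ i : Fin n, ((((a i : ℕ) : ℂ) + 1) - (d : ℂ) / 2) from rfl,
    Finset.sum_sub_distrib, Finset.sum_const, card_univ, Fintype.card_fin, nsmul_eq_mul]
  ring

lemma zpow_S (d n j : ℕ) (a : Fin n → Fin (d - 1)) :
    (zeta d ^ j) ^ (tupleSum d n a) = ∏ k, phiF d j (a k) := by
  rw [tupleSum, ← Finset.prod_pow_eq_pow_sum]
  rfl

lemma T_fourier (d n : ℕ) (hd : d ≠ 0) :
    ((∑ a ∈ intTuples d n, ((tupleSum d n a : ℝ) - n * d / 2) ^ 2 : ℝ) : ℂ) * d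
    = ∑ j ∈ range d, WF d n j := by
  classical
  have hcast : ((∑ a ∈ intTuples d n, ((tupleSum d n a : ℝ) - n * d / 2) ^ 2 : ℝ) : ℂ) * d
      = ∑ a ∈ intTuples d n,
          ((((tupleSum d n a : ℂ) - n * d / 2) * ((tupleSum d n a : ℂ) - n * d / 2)) * d) := by
    push_cast
    rw [Finset.sum_mul]
    exact Finset.sum_congr rfl fun a _ => by ring
  rw [hcast, intTuples, Finset.sum_filter]
  have step2 : ∀ a : Fin n → Fin (d - 1),
      (if d ∣ tupleSum d n a then
        (((tupleSum d n a : ℂ) - n * d / 2) * ((tupleSum d n a : ℂ) - n * d / 2)) * d else 0)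
      = (((tupleSum d n a : ℂ) - n * d / 2) * ((tupleSum d n a : ℂ) - n * d / 2))
          * ∑ j ∈ range d, (zeta d ^ (tupleSum d n a)) ^ j := by
    intro a
    rw [root_sum d hd]
    by_cases h : d ∣ tupleSum d n a <;> simp [h]
  rw [Finset.sum_congr rfl fun a _ => step2 a]
  have step3 : ∀ a : Fin n → Fin (d - 1),
      (((tupleSum d n a : ℂ) - n * d / 2) * ((tupleSum d n a : ℂ) - n * d / 2))
          * ∑ j ∈ range d, (zeta d ^ (tupleSum d n a)) ^ j
      = ∑ j ∈ range d, ((∏ k, phiF d j (a k)) * ((∑ i, yF d (a i)) * (∑ i, yF d (a i)))) := by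
    intro a
    rw [Finset.mul_sum]
    refine Finset.sum_congr rfl fun j _ => ?_
    rw [pow_right_comm, zpow_S, gc_eq]
    ring
  rw [Finset.sum_congr rfl fun a _ => step3 a]
  rw [Finset.sum_comm]
  rfl

lemma M_fourier (d n : ℕ) (hd : d ≠ 0) :
    (((intTuples d n).card : ℂ)) * d = ∑ j ∈ range d, (∑ v : Fin (d - 1), phiF d j v) ^ n := by
  classical
  have h0 : ((intTuples d n).card : ℂ) * d = ∑ a ∈ intTuples d n, (d : ℂ) := by
    rw [Finset.sum_const, nsmul_eq_mul]
  rw [h0, intTuples, Finset.sum_filter]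
  have step2 : ∀ a : Fin n → Fin (d - 1),
      (if d ∣ tupleSum d n a then (d : ℂ) else 0)
      = ∑ j ∈ range d, (zeta d ^ (tupleSum d n a)) ^ j := fun a => (root_sum d hd _).symm
  rw [Finset.sum_congr rfl fun a _ => step2 a]
  rw [Finset.sum_comm]
  refine Finset.sum_congr rfl fun j _ => ?_
  have step3 : ∀ a : Fin n → Fin (d - 1),
      (zeta d ^ (tupleSum d n a)) ^ j = ∏ k, phiF d j (a k) := by
    intro a
    rw [pow_right_comm, zpow_S]
  rw [Finset.sum_congr rfl fun a _ => step3 a, tuple_prod_sum (fun _ v => phiF d j v),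
    Finset.prod_const, card_univ, Fintype.card_fin]

lemma sum_phi0 (d : ℕ) : ∑ v : Fin (d - 1), phiF d 0 v = ((d - 1 : ℕ) : ℂ) := by
  simp [phiF]

lemma sum_phi_ne (d j : ℕ) (hd : 2 ≤ d) (hj0 : j ≠ 0) (hjd : j < d) :
    ∑ v : Fin (d - 1), phiF d j v = -1 := by
  have hdne : d ≠ 0 := by omega
  have hz1 : zeta d ^ j ≠ 1 :=
    (Complex.isPrimitiveRoot_exp d hdne).pow_ne_one_of_pos_of_lt hj0 hjd
  have hzd : (zeta d ^ j) ^ d = 1 := by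
    rw [← pow_mul, mul_comm j d, pow_mul, zeta_pow_d d hdne, one_pow]
  exact geom_minus_one hzd hz1 hdne

lemma sum_yB (d : ℕ) (hd : 1 ≤ d) : ∑ v : Fin (d - 1), yF d v = 0 := by
  have h := yB (d - 1)
  have hc : ((d - 1 : ℕ) : ℝ) + 1 = (d : ℝ) := by
    rw [Nat.cast_sub hd]; ring
  rw [hc] at h
  have h2 : ∑ x ∈ range (d - 1), ((x : ℂ) + 1 - (d : ℂ) / 2) = 0 := by
    calc ∑ x ∈ range (d - 1), ((x : ℂ) + 1 - (d : ℂ) / 2)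
        = ((∑ x ∈ range (d - 1), ((x : ℝ) + 1 - (d : ℝ) / 2) : ℝ) : ℂ) := by
          push_cast; rfl
      _ = 0 := by rw [h]; norm_num
  show ∑ v : Fin (d - 1), (((v : ℕ) : ℂ) + 1 - (d : ℂ) / 2) = 0
  rw [Fin.sum_univ_eq_sum_range (fun x => ((x : ℂ) + 1 - (d : ℂ) / 2))]
  exact h2

lemma sum_yC (d : ℕ) (hd : 1 ≤ d) :
    ∑ v : Fin (d - 1), yF d v * yF d v = (((d : ℝ) * ((d : ℝ) - 1) * ((d : ℝ) - 2) / 12 : ℝ) : ℂ) := by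
  have h := yC (d - 1)
  have hc : ((d - 1 : ℕ) : ℝ) = (d : ℝ) - 1 := by
    rw [Nat.cast_sub hd]; norm_num
  rw [hc] at h
  have h' : ∑ x ∈ range (d - 1), ((x : ℝ) + 1 - (d : ℝ) / 2) ^ 2
      = (d : ℝ) * ((d : ℝ) - 1) * ((d : ℝ) - 2) / 12 := by
    rw [show ((d:ℝ) - 1 + 1) = (d:ℝ) by ring] at h
    rw [h]; ring
  have h2 : ∑ x ∈ range (d - 1), (((x : ℂ) + 1 - (d : ℂ) / 2) * ((x : ℂ) + 1 - (d : ℂ) / 2))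
      = (((d : ℝ) * ((d : ℝ) - 1) * ((d : ℝ) - 2) / 12 : ℝ) : ℂ) := by
    calc ∑ x ∈ range (d - 1), (((x : ℂ) + 1 - (d : ℂ) / 2) * ((x : ℂ) + 1 - (d : ℂ) / 2))
        = ((∑ x ∈ range (d - 1), ((x : ℝ) + 1 - (d : ℝ) / 2) ^ 2 : ℝ) : ℂ) := by
          push_cast; exact Finset.sum_congr rfl fun x _ => by ring
      _ = _ := by rw [h']
  show ∑ v : Fin (d - 1), ((((v : ℕ) : ℂ) + 1 - (d : ℂ) / 2) * (((v : ℕ) : ℂ) + 1 - (d : ℂ) / 2)) = _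
  rw [Fin.sum_univ_eq_sum_range (fun x => (((x : ℂ) + 1 - (d : ℂ) / 2) * ((x : ℂ) + 1 - (d : ℂ) / 2)))]
  exact h2

lemma W0_val (d n : ℕ) (hd : 2 ≤ d) (hn : 1 ≤ n) :
    WF d n 0 = (((n : ℝ) * ((d : ℝ) * ((d : ℝ) - 1) * ((d : ℝ) - 2) / 12) * ((d : ℝ) - 1) ^ (n - 1) : ℝ) : ℂ) := by
  rw [WF, key_factor n hn (phiF d 0) (yF d)]
  have hphi : ∀ v : Fin (d - 1), phiF d 0 v = 1 := fun v => by simp [phiF]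
  simp only [hphi, one_mul]
  rw [sum_yC d (by omega), sum_yB d (by omega)]
  have hcard : ∑ _v : Fin (d - 1), (1 : ℂ) = ((d - 1 : ℕ) : ℂ) := by simp
  rw [hcard]
  have hc : ((d - 1 : ℕ) : ℂ) = (d : ℂ) - 1 := by
    push_cast [Nat.cast_sub (show 1 ≤ d by omega)]; ring
  rw [hc]
  push_cast
  ring

lemma Wj_bound (d n j : ℕ) (hd : 2 ≤ d) (hn : 1 ≤ n) (hj0 : j ≠ 0) (hjd : j < d) :
    ‖WF d n j‖ ≤ (n : ℝ) * ((d : ℝ) ^ 3 / 4) + (n : ℝ) ^ 2 * ((d : ℝ) ^ 4 / 4) := by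
  rw [WF, key_factor n hn (phiF d j) (yF d), sum_phi_ne d j hd hj0 hjd]
  have habsφ : ∀ v : Fin (d - 1), ‖phiF d j v‖ = 1 := by
    intro v
    rw [phiF]
    rw [norm_pow, norm_pow, abs_zeta, one_pow, one_pow]
  have habsy : ∀ v : Fin (d - 1), ‖yF d v‖ ≤ (d : ℝ) / 2 := by
    intro v
    have hv : ((v : ℕ) : ℝ) + 2 ≤ (d : ℝ) := by
      have h2 : (v : ℕ) + 2 ≤ d := by have := v.2; omega
      exact_mod_cast h2
    have hv0 : (0 : ℝ) ≤ ((v : ℕ) : ℝ) := Nat.cast_nonneg _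
    have hyf : yF d v = ((((v : ℕ) : ℝ) + 1 - (d : ℝ) / 2 : ℝ) : ℂ) := by
      rw [yF]; push_cast; ring
    rw [hyf, Complex.norm_real, Real.norm_eq_abs, abs_le]
    constructor <;> [linarith; linarith]
  set B := ∑ v : Fin (d - 1), phiF d j v * yF d v with hBdef
  set C := ∑ v : Fin (d - 1), phiF d j v * (yF d v * yF d v) with hCdef
  have hcard : (((univ : Finset (Fin (d - 1))).card : ℝ)) ≤ (d : ℝ) := by
    rw [card_univ, Fintype.card_fin]
    have : (d - 1 : ℕ) ≤ d := by omega
    exact_mod_cast this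
  have hB : ‖B‖ ≤ (d : ℝ) ^ 2 / 2 := by
    calc ‖B‖ ≤ ∑ v : Fin (d - 1), ‖phiF d j v * yF d v‖ :=
          norm_sum_le _ _
      _ ≤ ∑ _v : Fin (d - 1), (d : ℝ) / 2 := by
          refine Finset.sum_le_sum fun v _ => ?_
          rw [norm_mul, habsφ v, one_mul]
          exact habsy v
      _ = ((univ : Finset (Fin (d - 1))).card : ℝ) * ((d : ℝ) / 2) := by
          rw [Finset.sum_const, nsmul_eq_mul]
      _ ≤ (d : ℝ) * ((d : ℝ) / 2) := by
          have h0 : (0 : ℝ) ≤ (d : ℝ) / 2 := by positivity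
          exact mul_le_mul_of_nonneg_right hcard h0
      _ = (d : ℝ) ^ 2 / 2 := by ring
  have hC : ‖C‖ ≤ (d : ℝ) ^ 3 / 4 := by
    calc ‖C‖ ≤ ∑ v : Fin (d - 1), ‖phiF d j v * (yF d v * yF d v)‖ :=
          norm_sum_le _ _
      _ ≤ ∑ _v : Fin (d - 1), ((d : ℝ) / 2) * ((d : ℝ) / 2) := by
          refine Finset.sum_le_sum fun v _ => ?_
          rw [norm_mul, habsφ v, one_mul, norm_mul]
          exact mul_le_mul (habsy v) (habsy v) (norm_nonneg _) (by positivity)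
      _ = ((univ : Finset (Fin (d - 1))).card : ℝ) * ((d : ℝ) / 2 * ((d : ℝ) / 2)) := by
          rw [Finset.sum_const, nsmul_eq_mul]
      _ ≤ (d : ℝ) * ((d : ℝ) / 2 * ((d : ℝ) / 2)) := by
          exact mul_le_mul_of_nonneg_right hcard (by positivity)
      _ = (d : ℝ) ^ 3 / 4 := by ring
  have habsn1 : ‖(n : ℂ) - 1‖ ≤ (n : ℝ) := by
    have : ((n : ℂ) - 1) = ((n - 1 : ℕ) : ℂ) := by
      push_cast [Nat.cast_sub hn]; ring
    rw [this, Complex.norm_natCast]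
    exact_mod_cast Nat.sub_le n 1
  have habsneg : ∀ k : ℕ, ‖(-1 : ℂ) ^ k‖ = 1 := by
    intro k; rw [norm_pow, norm_neg, norm_one, one_pow]
  calc ‖(n : ℂ) * (C * (-1 : ℂ) ^ (n - 1) + ((n : ℂ) - 1) * B ^ 2 * (-1 : ℂ) ^ (n - 2))‖
      = (n : ℝ) * ‖C * (-1 : ℂ) ^ (n - 1) + ((n : ℂ) - 1) * B ^ 2 * (-1 : ℂ) ^ (n - 2)‖ := by
        rw [norm_mul, Complex.norm_natCast]
    _ ≤ (n : ℝ) * (‖C‖ + (n : ℝ) * ((d : ℝ) ^ 2 / 2) ^ 2) := by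
        refine mul_le_mul_of_nonneg_left ?_ (Nat.cast_nonneg n)
        calc ‖C * (-1 : ℂ) ^ (n - 1) + ((n : ℂ) - 1) * B ^ 2 * (-1 : ℂ) ^ (n - 2)‖
            ≤ ‖C * (-1 : ℂ) ^ (n - 1)‖
              + ‖((n : ℂ) - 1) * B ^ 2 * (-1 : ℂ) ^ (n - 2)‖ := norm_add_le _ _
          _ = ‖C‖ + ‖(n : ℂ) - 1‖ * (‖B‖) ^ 2 := by
              rw [norm_mul, habsneg, mul_one, norm_mul, norm_mul, habsneg, mul_one, norm_pow]
          _ ≤ ‖C‖ + (n : ℝ) * ((d : ℝ) ^ 2 / 2) ^ 2 := by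
              have h1 : (‖B‖) ^ 2 ≤ ((d : ℝ) ^ 2 / 2) ^ 2 :=
                pow_le_pow_left₀ (norm_nonneg _) hB 2
              have h2 : ‖(n : ℂ) - 1‖ * (‖B‖) ^ 2
                  ≤ (n : ℝ) * ((d : ℝ) ^ 2 / 2) ^ 2 :=
                mul_le_mul habsn1 h1 (by positivity) (Nat.cast_nonneg n)
              linarith
    _ ≤ (n : ℝ) * ((d : ℝ) ^ 3 / 4) + (n : ℝ) ^ 2 * ((d : ℝ) ^ 4 / 4) := by
        have hn0 : (0 : ℝ) ≤ (n : ℝ) := Nat.cast_nonneg n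
        nlinarith [hC, hn0]

lemma M_val (d n : ℕ) (hd : 2 ≤ d) :
    ((intTuples d n).card : ℝ) * d = ((d : ℝ) - 1) ^ n + ((d : ℝ) - 1) * (-1 : ℝ) ^ n := by
  have hdne : d ≠ 0 := by omega
  have h := M_fourier d n hdne
  have h0mem : (0 : ℕ) ∈ range d := mem_range.2 (by omega)
  rw [Finset.sum_eq_sum_sdiff_singleton_add h0mem] at h
  have h1 : ∀ j ∈ range d \ {0}, (∑ v : Fin (d - 1), phiF d j v) ^ n = (-1 : ℂ) ^ n := by
    intro j hj
    rw [Finset.mem_sdiff, Finset.mem_singleton, mem_range] at hj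
    rw [sum_phi_ne d j hd hj.2 hj.1]
  rw [Finset.sum_congr rfl h1, Finset.sum_const, sum_phi0, nsmul_eq_mul] at h
  have hcard : ((range d \ {0}).card : ℂ) = ((d - 1 : ℕ) : ℂ) := by
    rw [Finset.card_sdiff_of_subset (by simpa using h0mem)]
    simp
  rw [hcard] at h
  have hc : ((d - 1 : ℕ) : ℂ) = (d : ℂ) - 1 := by
    push_cast [Nat.cast_sub (show 1 ≤ d by omega)]; ring
  rw [hc] at h
  have h2 : (((((intTuples d n).card : ℝ)) * d : ℝ) : ℂ)
      = ((((d : ℝ) - 1) ^ n + ((d : ℝ) - 1) * (-1 : ℝ) ^ n : ℝ) : ℂ) := by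
    push_cast
    rw [h]; ring
  exact_mod_cast h2

lemma T_bound (d n : ℕ) (hd : 2 ≤ d) (hn : 1 ≤ n) :
    (∑ a ∈ intTuples d n, ((tupleSum d n a : ℝ) - n * d / 2) ^ 2) * d
    ≤ (n : ℝ) * ((d : ℝ) * ((d : ℝ) - 1) * ((d : ℝ) - 2) / 12) * ((d : ℝ) - 1) ^ (n - 1)
      + (d : ℝ) * ((n : ℝ) * ((d : ℝ) ^ 3 / 4) + (n : ℝ) ^ 2 * ((d : ℝ) ^ 4 / 4)) := by
  have hdne : d ≠ 0 := by omega
  have h := T_fourier d n hdne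
  have h0mem : (0 : ℕ) ∈ range d := mem_range.2 (by omega)
  rw [Finset.sum_eq_sum_sdiff_singleton_add h0mem] at h
  set T := ∑ a ∈ intTuples d n, ((tupleSum d n a : ℝ) - n * d / 2) ^ 2 with hTdef
  have hre : T * (d : ℝ) = (∑ j ∈ range d \ {0}, WF d n j).re + (WF d n 0).re := by
    have hcast : ((T : ℝ) : ℂ) * (d : ℂ) = ((T * d : ℝ) : ℂ) := by push_cast; ring
    rw [hcast] at h
    have := congrArg Complex.re h
    rw [Complex.ofReal_re, Complex.add_re] at this
    exact this
  rw [W0_val d n hd hn, Complex.ofReal_re] at hre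
  have hrest : (∑ j ∈ range d \ {0}, WF d n j).re
      ≤ (d : ℝ) * ((n : ℝ) * ((d : ℝ) ^ 3 / 4) + (n : ℝ) ^ 2 * ((d : ℝ) ^ 4 / 4)) := by
    calc (∑ j ∈ range d \ {0}, WF d n j).re
        ≤ ‖∑ j ∈ range d \ {0}, WF d n j‖ := Complex.re_le_norm _
      _ ≤ ∑ j ∈ range d \ {0}, ‖WF d n j‖ := norm_sum_le _ _
      _ ≤ ∑ _j ∈ range d \ {0}, ((n : ℝ) * ((d : ℝ) ^ 3 / 4) + (n : ℝ) ^ 2 * ((d : ℝ) ^ 4 / 4)) := by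
          refine Finset.sum_le_sum fun j hj => ?_
          rw [Finset.mem_sdiff, Finset.mem_singleton, mem_range] at hj
          exact Wj_bound d n j hd hn hj.2 hj.1
      _ = ((range d \ {0}).card : ℝ) * ((n : ℝ) * ((d : ℝ) ^ 3 / 4) + (n : ℝ) ^ 2 * ((d : ℝ) ^ 4 / 4)) := by
          rw [Finset.sum_const, nsmul_eq_mul]
      _ ≤ (d : ℝ) * ((n : ℝ) * ((d : ℝ) ^ 3 / 4) + (n : ℝ) ^ 2 * ((d : ℝ) ^ 4 / 4)) := by
          refine mul_le_mul_of_nonneg_right ?_ (by positivity)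
          have : (range d \ {0}).card ≤ d := by
            calc (range d \ {0}).card ≤ (range d).card := Finset.card_le_card (Finset.sdiff_subset)
              _ = d := Finset.card_range d
          exact_mod_cast this
  linarith

def revT (d n : ℕ) (a : Fin n → Fin (d - 1)) : Fin n → Fin (d - 1) :=
  fun i => ⟨d - 2 - (a i : ℕ), by have := (a i).2; omega⟩

lemma revT_sum (d n : ℕ) (a : Fin n → Fin (d - 1)) :
    tupleSum d n (revT d n a) + tupleSum d n a = n * d := by
  rw [tupleSum, tupleSum, ← Finset.sum_add_distrib]
  have h1 : ∀ i ∈ (univ : Finset (Fin n)),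
      (((revT d n a) i : ℕ) + 1) + ((a i : ℕ) + 1) = d := by
    intro i _
    show ((d - 2 - (a i : ℕ)) + 1) + ((a i : ℕ) + 1) = d
    have := (a i).2; omega
  rw [Finset.sum_congr rfl h1, Finset.sum_const, card_univ, Fintype.card_fin, smul_eq_mul]

lemma revT_invol (d n : ℕ) (a : Fin n → Fin (d - 1)) : revT d n (revT d n a) = a := by
  funext i
  apply Fin.ext
  show d - 2 - (d - 2 - (a i : ℕ)) = (a i : ℕ)
  have := (a i).2; omega

lemma revT_mem (d n : ℕ) (a : Fin n → Fin (d - 1)) (ha : a ∈ intTuples d n) :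
    revT d n a ∈ intTuples d n := by
  rw [intTuples, Finset.mem_filter] at ha ⊢
  refine ⟨mem_univ _, ?_⟩
  have hdvd : d ∣ tupleSum d n a := ha.2
  have hrev : tupleSum d n (revT d n a) = n * d - tupleSum d n a := by
    have := revT_sum d n a; omega
  rw [hrev]
  exact Nat.dvd_sub (dvd_mul_left d n) hdvd

set_option maxHeartbeats 1600000 in
lemma final_ineq (d n : ℕ) (M T : ℝ) (hnd : n ≤ d) (hn : 500000 ≤ n)
    (hTnn : 0 ≤ T)
    (hMv' : M * (d : ℝ) = ((d : ℝ) - 1) ^ n + ((d : ℝ) - 1) * (-1 : ℝ) ^ n)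
    (hTb' : T * (d : ℝ)
      ≤ (n : ℝ) * ((d : ℝ) * ((d : ℝ) - 1) * ((d : ℝ) - 2) / 12) * ((d : ℝ) - 1) ^ (n - 1)
        + (d : ℝ) * ((n : ℝ) * ((d : ℝ) ^ 3 / 4) + (n : ℝ) ^ 2 * ((d : ℝ) ^ 4 / 4))) :
    0 < M ∧ 10.2 * T ≤ (n : ℝ) * (d : ℝ) ^ 2 * M := by
  have hn1 : 1 ≤ n := by omega
  have hd0 : (0 : ℝ) < d := by exact_mod_cast (show 0 < d by omega)
  have hd500 : (500000 : ℝ) ≤ d := by exact_mod_cast (show 500000 ≤ d by omega)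
  have hn500 : (500000 : ℝ) ≤ n := by exact_mod_cast hn
  have hnd' : (n : ℝ) ≤ d := by exact_mod_cast hnd
  have hn0 : (0 : ℝ) < n := by linarith
  set E := (d : ℝ) - 1 with hE
  set X := E ^ (n - 1) with hX
  have hE1 : (1 : ℝ) ≤ E := by rw [hE]; linarith
  have hE0 : (0 : ℝ) ≤ E := by linarith
  have hX0 : (0 : ℝ) ≤ X := by rw [hX]; exact pow_nonneg hE0 _
  have hEn : E ^ n = X * E := by
    rw [hX, ← pow_succ, Nat.sub_add_cancel hn1]
  have hMd : E * X - E ≤ M * d := by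
    rw [hMv']
    have h1 : (-1 : ℝ) ^ n = 1 ∨ (-1 : ℝ) ^ n = -1 := neg_one_pow_eq_or ℝ n
    rw [hEn]
    rcases h1 with h1 | h1 <;> rw [h1] <;> linarith
  have hMpos : 0 < M := by
    have hXbig : (2 : ℝ) ≤ X := by
      calc (2 : ℝ) ≤ E := by rw [hE]; linarith
        _ = E ^ 1 := (pow_one E).symm
        _ ≤ E ^ (n - 1) := pow_le_pow_right₀ hE1 (by omega)
    have h2 : 0 < M * d := by nlinarith [hMd, hE1, hX0]
    nlinarith [h2, hd0]
  have hXE8 : E ^ 8 ≤ X := by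
    rw [hX]
    exact pow_le_pow_right₀ hE1 (by omega)
  have hEd2 : (d : ℝ) / 2 ≤ E := by rw [hE]; linarith
  have hE9 : ((d : ℝ) / 2) ^ 9 ≤ E * X := by
    calc ((d : ℝ) / 2) ^ 9 ≤ E ^ 9 := pow_le_pow_left₀ (by positivity) hEd2 9
      _ = E * E ^ 8 := by ring
      _ ≤ E * X := mul_le_mul_of_nonneg_left hXE8 hE0
  have hEd : E ≤ (d : ℝ) := by rw [hE]; linarith
  clear_value X E
  have hkey : 10.2 * ((n : ℝ) * ((d : ℝ) * E * ((d : ℝ) - 2) / 12) * X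
        + (d : ℝ) * ((n : ℝ) * ((d : ℝ) ^ 3 / 4) + (n : ℝ) ^ 2 * ((d : ℝ) ^ 4 / 4)))
      ≤ (n : ℝ) * (d : ℝ) ^ 2 * (E * X - E) := by
    have h1 : 0.85 * (n : ℝ) * (d : ℝ) * E * ((d : ℝ) - 2) * X
        ≤ 0.85 * (n : ℝ) * (d : ℝ) ^ 2 * E * X := by
      have hnn : (0 : ℝ) ≤ 0.85 * (n : ℝ) * (d : ℝ) * E * X :=
        mul_nonneg (mul_nonneg (mul_nonneg (by positivity) hd0.le) hE0) hX0
      nlinarith [mul_le_mul_of_nonneg_left (show (d : ℝ) - 2 ≤ (d : ℝ) by linarith) hnn]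
    have h2 : 2.55 * (n : ℝ) * (d : ℝ) ^ 4 + 2.55 * (n : ℝ) ^ 2 * (d : ℝ) ^ 5
          + (n : ℝ) * (d : ℝ) ^ 2 * E
        ≤ 0.15 * (n : ℝ) * (d : ℝ) ^ 2 * (E * X) := by
      have ha : 2.55 * (n : ℝ) ^ 2 * (d : ℝ) ^ 5 ≤ 2.55 * (n : ℝ) * (d : ℝ) ^ 6 := by
        nlinarith [mul_le_mul_of_nonneg_left hnd' (show (0:ℝ) ≤ 2.55 * (n : ℝ) * (d : ℝ) ^ 5 by positivity)]
      have hb : (n : ℝ) * (d : ℝ) ^ 2 * E ≤ (n : ℝ) * (d : ℝ) ^ 3 := by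
        nlinarith [mul_le_mul_of_nonneg_left hEd (show (0:ℝ) ≤ (n : ℝ) * (d : ℝ) ^ 2 by positivity)]
      have hc : 2.55 * (n : ℝ) * (d : ℝ) ^ 4 + 2.55 * (n : ℝ) * (d : ℝ) ^ 6 + (n : ℝ) * (d : ℝ) ^ 3
          ≤ 3 * (n : ℝ) * (d : ℝ) ^ 6 := by
        have e0 : (1:ℝ) ≤ (d:ℝ) := by linarith
        have e1 : (d:ℝ) ^ 3 ≤ (d:ℝ) ^ 4 := by
          nlinarith [mul_le_mul_of_nonneg_left e0 (show (0:ℝ) ≤ (d:ℝ)^3 by positivity)]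
        have e2 : (3.55:ℝ) ≤ 0.45 * (d:ℝ) ^ 2 := by nlinarith [hd500]
        have e4 : (0:ℝ) ≤ (d:ℝ) ^ 4 * (0.45 * (d:ℝ) ^ 2 - 3.55) :=
          mul_nonneg (by positivity) (by linarith)
        have e3 : 2.55 * (d:ℝ) ^ 4 + (d:ℝ) ^ 3 ≤ 0.45 * (d:ℝ) ^ 6 := by nlinarith [e1, e4]
        nlinarith [mul_le_mul_of_nonneg_left e3 hn0.le]
      have hd5 : (10240 : ℝ) ≤ (d : ℝ) ^ 5 := by
        calc (10240 : ℝ) ≤ (d : ℝ) := by linarith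
          _ ≤ (d : ℝ) ^ 5 := le_self_pow₀ (by linarith) (by norm_num)
      have he : 3 * (n : ℝ) * (d : ℝ) ^ 6 ≤ 0.15 * (n : ℝ) * (d : ℝ) ^ 2 * (((d : ℝ) / 2) ^ 9) := by
        have h9 : ((d : ℝ) / 2) ^ 9 = (d : ℝ) ^ 9 / 512 := by ring
        rw [h9]
        nlinarith [mul_le_mul_of_nonneg_left hd5
          (show (0:ℝ) ≤ (0.15 / 512) * (n : ℝ) * (d : ℝ) ^ 6 by positivity)]
      have hf : 0.15 * (n : ℝ) * (d : ℝ) ^ 2 * (((d : ℝ) / 2) ^ 9)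
          ≤ 0.15 * (n : ℝ) * (d : ℝ) ^ 2 * (E * X) :=
        mul_le_mul_of_nonneg_left hE9 (by positivity)
      linarith
    nlinarith [h1, h2]
  have hfin : 10.2 * (T * d) ≤ (n : ℝ) * (d : ℝ) ^ 2 * (M * d) := by
    have step1 : 10.2 * (T * d)
        ≤ 10.2 * ((n : ℝ) * ((d : ℝ) * E * ((d : ℝ) - 2) / 12) * X
            + (d : ℝ) * ((n : ℝ) * ((d : ℝ) ^ 3 / 4) + (n : ℝ) ^ 2 * ((d : ℝ) ^ 4 / 4))) := by
      linarith [hTb']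
    have step3 : (n : ℝ) * (d : ℝ) ^ 2 * (E * X - E) ≤ (n : ℝ) * (d : ℝ) ^ 2 * (M * d) :=
      mul_le_mul_of_nonneg_left hMd (by positivity)
    linarith [hkey]
  refine ⟨hMpos, ?_⟩
  have h1 : (10.2 * T) * d ≤ ((n : ℝ) * (d : ℝ) ^ 2 * M) * d := by nlinarith [hfin]
  exact le_of_mul_le_mul_right h1 hd0

set_option maxHeartbeats 1600000 in
/-- For `d ≥ n ≥ 500000`, the variance of `Z'_d(n)` satisfies
`Var(Z'_d(n)) ≤ n/5.1`. -/
theorem stmt_15 (d n : ℕ) (hnd : n ≤ d) (hn : 500000 ≤ n) :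
    (∑ a ∈ intTuples d n, ∑ b ∈ intTuples d n, (Z' d n a b - Z'mean d n) ^ 2)
        / ((intTuples d n).card : ℝ) ^ 2
    ≤ (n : ℝ) / 5.1 := by
  have hd2 : 2 ≤ d := by omega
  have hn1 : 1 ≤ n := by omega
  have hd0 : (0 : ℝ) < d := by exact_mod_cast (show 0 < d by omega)
  have hd500 : (500000 : ℝ) ≤ d := by exact_mod_cast (show 500000 ≤ d by omega)
  have hn500 : (500000 : ℝ) ≤ n := by exact_mod_cast hn
  have hnd' : (n : ℝ) ≤ d := by exact_mod_cast hnd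
  have hn0 : (0 : ℝ) < n := by linarith
  set I := intTuples d n with hI
  set M := ((intTuples d n).card : ℝ) with hM
  set gR : (Fin n → Fin (d - 1)) → ℝ := fun a => (tupleSum d n a : ℝ) - n * d / 2 with hgR
  set T := ∑ a ∈ I, (gR a) ^ 2 with hT
  -- the linear term vanishes
  have hadd : ∀ a, gR (revT d n a) + gR a = 0 := by
    intro a
    have h1 : ((tupleSum d n (revT d n a) : ℝ)) + (tupleSum d n a : ℝ) = n * d := by
      exact_mod_cast congrArg (Nat.cast : ℕ → ℝ) (revT_sum d n a)
    simp only [hgR]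
    linarith
  have hL : ∑ a ∈ I, gR a = 0 := by
    refine Finset.sum_involution (fun a _ => revT d n a) ?_ ?_ ?_ ?_
    · intro a _
      have := hadd a; linarith
    · intro a _ hfa heq
      apply hfa
      have h1 := hadd a
      have heq' : revT d n a = a := heq
      rw [heq'] at h1
      linarith
    · intro a ha; exact revT_mem d n a ha
    · intro a _; exact revT_invol d n a
  -- mean minimizes squared deviation
  have hmean : ∑ a ∈ I, ∑ b ∈ I, (Z' d n a b - Z'mean d n) ^ 2
      ≤ ∑ a ∈ I, ∑ b ∈ I, (Z' d n a b - (n : ℝ)) ^ 2 := by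
    have hp1 : ∀ c : ℝ, ∑ a ∈ I, ∑ b ∈ I, (Z' d n a b - c) ^ 2
        = ∑ p ∈ I ×ˢ I, (Z' d n p.1 p.2 - c) ^ 2 := fun c =>
      (Finset.sum_product' I I (fun a b => (Z' d n a b - c) ^ 2)).symm
    rw [hp1, hp1]
    have hμ : Z'mean d n = (∑ p ∈ I ×ˢ I, Z' d n p.1 p.2) / (((I ×ˢ I).card : ℝ)) := by
      rw [Z'mean, Finset.card_product, ← Finset.sum_product' I I (fun a b => Z' d n a b)]
      push_cast
      rw [sq]
    rw [hμ]
    exact mean_min (I ×ˢ I) (fun p => Z' d n p.1 p.2) (n : ℝ)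
  -- expansion of second moment about n
  have hZab : ∀ a b, Z' d n a b - (n : ℝ) = (gR a + gR b) / d := by
    intro a b
    rw [Z']
    simp only [hgR]
    field_simp
    ring
  have hexp : ∑ a ∈ I, ∑ b ∈ I, (Z' d n a b - (n : ℝ)) ^ 2 = 2 * M * T / (d : ℝ) ^ 2 := by
    have inner : ∀ a, ∑ b ∈ I, (gR a + gR b) ^ 2
        = M * (gR a) ^ 2 + 2 * (gR a) * (∑ b ∈ I, gR b) + T := by
      intro a
      have h1 : ∀ b ∈ I, (gR a + gR b) ^ 2
          = ((gR a) ^ 2 + 2 * (gR a) * (gR b)) + (gR b) ^ 2 := fun b _ => by ring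
      rw [Finset.sum_congr rfl h1, Finset.sum_add_distrib, Finset.sum_add_distrib,
        Finset.sum_const, ← Finset.mul_sum, nsmul_eq_mul]
      all_goals try simp only [hM, hT]
      all_goals try ring
    calc ∑ a ∈ I, ∑ b ∈ I, (Z' d n a b - (n : ℝ)) ^ 2
        = ∑ a ∈ I, (∑ b ∈ I, (gR a + gR b) ^ 2) / (d : ℝ) ^ 2 := by
          refine Finset.sum_congr rfl fun a _ => ?_
          rw [Finset.sum_div]
          refine Finset.sum_congr rfl fun b _ => ?_
          rw [hZab a b, div_pow]
      _ = ∑ a ∈ I, (M * (gR a) ^ 2 + T) / (d : ℝ) ^ 2 := by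
          refine Finset.sum_congr rfl fun a _ => ?_
          rw [inner a, hL]
          try ring_nf
      _ = 2 * M * T / (d : ℝ) ^ 2 := by
          rw [← Finset.sum_div, Finset.sum_add_distrib, ← Finset.mul_sum, Finset.sum_const,
            nsmul_eq_mul]
          all_goals try simp only [hM, hT]
          all_goals try ring
  -- bounds from Fourier analysis
  have hTb := T_bound d n hd2 hn1
  have hMv := M_val d n hd2
  have hTnn : 0 ≤ T := Finset.sum_nonneg fun a _ => sq_nonneg _
  have hMv' : M * (d : ℝ) = ((d : ℝ) - 1) ^ n + ((d : ℝ) - 1) * (-1 : ℝ) ^ n := hMv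
  have hTb' : T * (d : ℝ)
      ≤ (n : ℝ) * ((d : ℝ) * ((d : ℝ) - 1) * ((d : ℝ) - 2) / 12) * ((d : ℝ) - 1) ^ (n - 1)
        + (d : ℝ) * ((n : ℝ) * ((d : ℝ) ^ 3 / 4) + (n : ℝ) ^ 2 * ((d : ℝ) ^ 4 / 4)) := hTb
  obtain ⟨hMpos, h102⟩ := final_ineq d n M T hnd hn hTnn hMv' hTb'
  have hM2 : (0 : ℝ) < M ^ 2 := pow_pos hMpos 2
  calc (∑ a ∈ I, ∑ b ∈ I, (Z' d n a b - Z'mean d n) ^ 2) / M ^ 2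
      ≤ (∑ a ∈ I, ∑ b ∈ I, (Z' d n a b - (n : ℝ)) ^ 2) / M ^ 2 := by
        gcongr
        all_goals try exact hmean
    _ = (2 * M * T / (d : ℝ) ^ 2) / M ^ 2 := by rw [hexp]
    _ ≤ (n : ℝ) / 5.1 := by
        rw [div_div, div_le_div_iff₀ (mul_pos (by positivity) hM2) (by norm_num)]
        nlinarith [mul_le_mul_of_nonneg_left h102 (le_of_lt hMpos), hMpos, hd0, hTnn]
end

section
/- The convolution of two log-concave sequences of nonnegative reals is log-concave; consequently, the distribution of the sum of two independent integer-valued random variables each with log-concave probability mass function is log-concave. -/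
section aux

variable {a : ℤ → ℝ}

/-- Chain lemma: under positivity on the interval, the cross product inequality. -/
lemma lc_chain (haLC : ∀ i, a (i - 1) * a (i + 1) ≤ a i ^ 2) :
    ∀ n : ℕ, ∀ x : ℤ, (∀ j, x - 1 ≤ j → j ≤ x + n + 1 → a j ≠ 0) →
      (∀ j, x - 1 ≤ j → j ≤ x + n + 1 → 0 < a j) →
      a (x - 1) * a (x + n + 1) ≤ a x * a (x + n) := by
  intro n
  induction n with
  | zero =>
    intro x _ _
    simpa [pow_two] using haLC x
  | succ n ih =>
    intro x hne hpos
    have hih := ih x (fun j h1 h2 => hne j h1 (by omega))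
      (fun j h1 h2 => hpos j h1 (by omega))
    have hlc := haLC (x + n + 1)
    rw [show x + (n:ℤ) + 1 - 1 = x + n by ring, show x + (n:ℤ) + 1 + 1 = x + (n+1:ℕ) + 1 by push_cast; ring] at hlc
    have h1 : 0 < a (x + n) := hpos _ (by omega) (by push_cast; omega)
    have h2 : 0 < a (x + (n:ℤ) + 1) := hpos _ (by omega) (by push_cast; omega)
    have hxn : a (x + ((n:ℕ)+1:ℕ)) = a (x + (n:ℤ) + 1) := by norm_num; ring_nf
    rw [hxn]
    have ha1 : 0 ≤ a (x - 1) := le_of_lt (hpos _ (by omega) (by push_cast; omega))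
    have hax : 0 ≤ a x := le_of_lt (hpos _ (by omega) (by push_cast; omega))
    nlinarith [mul_le_mul hih hlc (mul_nonneg h1.le (le_of_lt (hpos _ (by omega) (by push_cast; omega)))) (mul_nonneg hax h1.le)]

/-- Step lemma: `a (x-1) * a (y+1) ≤ a x * a y` for `x ≤ y`. -/
lemma lc_step (ha : ∀ i, 0 ≤ a i)
    (haSupp : ∀ i j k : ℤ, i ≤ j → j ≤ k → a i ≠ 0 → a k ≠ 0 → a j ≠ 0)
    (haLC : ∀ i, a (i - 1) * a (i + 1) ≤ a i ^ 2) :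
    ∀ x y : ℤ, x ≤ y → a (x - 1) * a (y + 1) ≤ a x * a y := by
  intro x y hxy
  by_cases h1 : a (x - 1) = 0
  · rw [h1, zero_mul]; exact mul_nonneg (ha x) (ha y)
  by_cases h2 : a (y + 1) = 0
  · rw [h2, mul_zero]; exact mul_nonneg (ha x) (ha y)
  have hne : ∀ j, x - 1 ≤ j → j ≤ y + 1 → a j ≠ 0 := fun j hj1 hj2 =>
    haSupp (x - 1) j (y + 1) hj1 hj2 h1 h2
  have hpos : ∀ j, x - 1 ≤ j → j ≤ y + 1 → 0 < a j := fun j hj1 hj2 =>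
    lt_of_le_of_ne (ha j) (Ne.symm (hne j hj1 hj2))
  obtain ⟨n, hn⟩ : ∃ n : ℕ, y = x + n := ⟨(y - x).toNat, by omega⟩
  subst hn
  exact lc_chain haLC n x (fun j hj1 hj2 => hne j hj1 (by omega))
    (fun j hj1 hj2 => hpos j hj1 (by omega))

/-- Spread lemma. -/
lemma lc_spread (ha : ∀ i, 0 ≤ a i)
    (haSupp : ∀ i j k : ℤ, i ≤ j → j ≤ k → a i ≠ 0 → a k ≠ 0 → a j ≠ 0)
    (haLC : ∀ i, a (i - 1) * a (i + 1) ≤ a i ^ 2) :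
    ∀ d : ℕ, ∀ x y : ℤ, x ≤ y → a (x - d) * a (y + d) ≤ a x * a y := by
  intro d
  induction d with
  | zero => intro x y _; simp
  | succ d ih =>
    intro x y hxy
    have h1 : a ((x - d) - 1) * a ((y + d) + 1) ≤ a (x - d) * a (y + d) :=
      lc_step ha haSupp haLC (x - d) (y + d) (by omega)
    calc a (x - ((d:ℕ)+1:ℕ)) * a (y + ((d:ℕ)+1:ℕ))
        = a ((x - d) - 1) * a ((y + d) + 1) := by push_cast; ring_nf
      _ ≤ a (x - d) * a (y + d) := h1
      _ ≤ a x * a y := ih x y hxy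

/-- TP₂ fact: for `m ≤ m'`, `a (m-1) * a m' ≤ a m * a (m'-1)`. -/
lemma lc_tp2 (ha : ∀ i, 0 ≤ a i)
    (haSupp : ∀ i j k : ℤ, i ≤ j → j ≤ k → a i ≠ 0 → a k ≠ 0 → a j ≠ 0)
    (haLC : ∀ i, a (i - 1) * a (i + 1) ≤ a i ^ 2) :
    ∀ m m' : ℤ, m ≤ m' → a (m - 1) * a m' ≤ a m * a (m' - 1) := by
  intro m m' hmm
  rcases eq_or_lt_of_le hmm with h | h
  · subst h; rw [mul_comm]
  · have := lc_spread ha haSupp haLC 1 m (m' - 1) (by omega)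
    simpa [show (m' : ℤ) - 1 + (1:ℕ) = m' by push_cast; ring] using this

end aux

/-- The convolution of two log-concave sequences of nonnegative reals (with
contiguous support) is log-concave.  In particular (taking `a` and `b` to be
probability mass functions, i.e. with total sum 1), the distribution of the sum
of two independent integer-valued random variables, each with log-concave
probability mass function, is log-concave. -/
theorem stmt_17 (a b : ℤ → ℝ)
    (ha : ∀ i, 0 ≤ a i) (hb : ∀ i, 0 ≤ b i)
    (haSupp : ∀ i j k : ℤ, i ≤ j → j ≤ k → a i ≠ 0 → a k ≠ 0 → a j ≠ 0)
    (hbSupp : ∀ i j k : ℤ, i ≤ j → j ≤ k → b i ≠ 0 → b k ≠ 0 → b j ≠ 0)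
    (haLC : ∀ i, a (i - 1) * a (i + 1) ≤ a i ^ 2)
    (hbLC : ∀ i, b (i - 1) * b (i + 1) ≤ b i ^ 2)
    (hconv : ∀ k : ℤ, Summable (fun i => a i * b (k - i))) :
    ∀ k : ℤ,
      (∑' i, a i * b ((k - 1) - i)) * (∑' i, a i * b ((k + 1) - i))
        ≤ (∑' i, a i * b (k - i)) ^ 2 := by
  intro k
  -- four sequences
  set f₀ : ℤ → ℝ := fun m => a (m - 1) * b (k - m) with hf₀
  set f₁ : ℤ → ℝ := fun m => a m * b (k - m) with hf₁
  set g₀ : ℤ → ℝ := fun m => a (m - 1) * b (k + 1 - m) with hg₀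
  set g₁ : ℤ → ℝ := fun m => a m * b (k + 1 - m) with hg₁
  -- summabilities
  have hsf₀ : Summable f₀ := by
    have := (hconv (k - 1)).comp_injective (Equiv.subRight (1:ℤ)).injective
    refine this.congr fun m => ?_
    simp only [Function.comp, Equiv.subRight_apply, hf₀]
    ring_nf
  have hsf₁ : Summable f₁ := hconv k
  have hsg₀ : Summable g₀ := by
    have := (hconv k).comp_injective (Equiv.subRight (1:ℤ)).injective
    refine this.congr fun m => ?_
    simp only [Function.comp, Equiv.subRight_apply, hg₀]
    ring_nf
  have hsg₁ : Summable g₁ := hconv (k + 1)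
  -- nonnegativity
  have hnf₀ : ∀ m, 0 ≤ f₀ m := fun m => mul_nonneg (ha _) (hb _)
  have hnf₁ : ∀ m, 0 ≤ f₁ m := fun m => mul_nonneg (ha _) (hb _)
  have hng₀ : ∀ m, 0 ≤ g₀ m := fun m => mul_nonneg (ha _) (hb _)
  have hng₁ : ∀ m, 0 ≤ g₁ m := fun m => mul_nonneg (ha _) (hb _)
  -- rewrite the three convolution sums
  have e₀ : (∑' i, a i * b ((k - 1) - i)) = ∑' m, f₀ m := by
    rw [← (Equiv.subRight (1:ℤ)).tsum_eq (fun i => a i * b ((k - 1) - i))]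
    refine tsum_congr fun m => ?_
    simp only [Equiv.subRight_apply, hf₀]
    ring_nf
  have e₁ : (∑' m, f₁ m) = ∑' m, g₀ m := by
    rw [← (Equiv.subRight (1:ℤ)).tsum_eq (fun i => a i * b (k - i))]
    refine tsum_congr fun m => ?_
    simp only [Equiv.subRight_apply, hg₀]
    ring_nf
  have e₂ : (∑' i, a i * b ((k + 1) - i)) = ∑' m, g₁ m := tsum_congr fun m => rfl
  -- product sums
  set F : ℤ × ℤ → ℝ := fun p => f₁ p.1 * g₀ p.2 with hF
  set G : ℤ × ℤ → ℝ := fun p => f₀ p.1 * g₁ p.2 with hG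
  have hsF : Summable F := hsf₁.mul_of_nonneg hsg₀ hnf₁ hng₀
  have hsG : Summable G := hsf₀.mul_of_nonneg hsg₁ hnf₀ hng₁
  have hFt : (∑' m, f₁ m) * (∑' m, g₀ m) = ∑' p : ℤ × ℤ, F p :=
    Summable.tsum_mul_tsum hsf₁ hsg₀ hsF
  have hGt : (∑' m, f₀ m) * (∑' m, g₁ m) = ∑' p : ℤ × ℤ, G p :=
    Summable.tsum_mul_tsum hsf₀ hsg₁ hsG
  -- swap
  have hsFs : Summable (fun p : ℤ × ℤ => F p.swap) :=
    hsF.comp_injective (Equiv.prodComm ℤ ℤ).injective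
  have hsGs : Summable (fun p : ℤ × ℤ => G p.swap) :=
    hsG.comp_injective (Equiv.prodComm ℤ ℤ).injective
  -- pointwise key inequality
  have key : ∀ p : ℤ × ℤ, G p + G p.swap ≤ F p + F p.swap := by
    rintro ⟨m, m'⟩
    simp only [hF, hG, Prod.swap, hf₀, hf₁, hg₀, hg₁]
    have hiden : (a m * b (k - m)) * (a (m' - 1) * b (k + 1 - m'))
        + (a m' * b (k - m')) * (a (m - 1) * b (k + 1 - m))
        - ((a (m - 1) * b (k - m)) * (a m' * b (k + 1 - m'))
        + (a (m' - 1) * b (k - m')) * (a m * b (k + 1 - m)))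
        = (a m * a (m' - 1) - a (m - 1) * a m')
          * (b (k - m) * b (k + 1 - m') - b (k - m') * b (k + 1 - m)) := by ring
    have hprod : 0 ≤ (a m * a (m' - 1) - a (m - 1) * a m')
          * (b (k - m) * b (k + 1 - m') - b (k - m') * b (k + 1 - m)) := by
      rcases le_total m m' with h | h
      · have hA : a (m - 1) * a m' ≤ a m * a (m' - 1) := lc_tp2 ha haSupp haLC m m' h
        have hB : b (k - m') * b (k + 1 - m) ≤ b (k - m) * b (k + 1 - m') := by
          have := lc_tp2 hb hbSupp hbLC (k + 1 - m') (k + 1 - m) (by omega)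
          calc b (k - m') * b (k + 1 - m)
              = b (k + 1 - m' - 1) * b (k + 1 - m) := by ring_nf
            _ ≤ b (k + 1 - m') * b (k + 1 - m - 1) := this
            _ = b (k - m) * b (k + 1 - m') := by ring_nf
        exact mul_nonneg (by linarith) (by linarith)
      · have hA : a (m' - 1) * a m ≤ a m' * a (m - 1) := lc_tp2 ha haSupp haLC m' m h
        have hB : b (k - m) * b (k + 1 - m') ≤ b (k - m') * b (k + 1 - m) := by
          have := lc_tp2 hb hbSupp hbLC (k + 1 - m) (k + 1 - m') (by omega)
          calc b (k - m) * b (k + 1 - m')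
              = b (k + 1 - m - 1) * b (k + 1 - m') := by ring_nf
            _ ≤ b (k + 1 - m) * b (k + 1 - m' - 1) := this
            _ = b (k - m') * b (k + 1 - m) := by ring_nf
        exact mul_nonneg_iff.mpr (Or.inr ⟨by linarith, by linarith⟩)
    linarith [hiden ▸ hprod]
  -- sum up
  have hsum : ∑' p : ℤ × ℤ, (G p + G p.swap) ≤ ∑' p : ℤ × ℤ, (F p + F p.swap) :=
    Summable.tsum_le_tsum key (hsG.add hsGs) (hsF.add hsFs)
  have hGs_eq : ∑' p : ℤ × ℤ, G p.swap = ∑' p : ℤ × ℤ, G p := by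
    exact (Equiv.prodComm ℤ ℤ).tsum_eq G
  have hFs_eq : ∑' p : ℤ × ℤ, F p.swap = ∑' p : ℤ × ℤ, F p := by
    exact (Equiv.prodComm ℤ ℤ).tsum_eq F
  rw [Summable.tsum_add hsG hsGs, Summable.tsum_add hsF hsFs, hGs_eq, hFs_eq] at hsum
  rw [e₀, e₂, pow_two]
  nth_rewrite 2 [e₁]
  rw [hFt, hGt]
  linarith
end
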